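/- arXiv:2007.03820 — 6 statements merged into one kernel-verified Lean document; each statement's English description precedes it below -/
import Mathlib

section
/- Let α > 0 and let G be a graph on n vertices with at least (5/9 + α)·n²/2 edges. Define A = {x ∈ V(G) : deg(x) < n/3} and B = {x ∈ V(G) : |N(x) \ A| ≤ αn/3}. Then the number of edges of G with both endpoints in A ∪ B is at most n²/18. -/
set_option maxHeartbeats 1600000 in
private lemma key (α a b M : ℝ) (hα : 0 < α) (ha : 0 ≤ a) (hb : 0 ≤ b)
    (hab : a + b ≤ 1) (ha2 : a ≤ 2/3 - 3*α/2) (hs : 1/3 ≤ a + b)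
    (hM : M = a/3 + α*b/3 + (1-a-b)^2/2 - 5/18 - α/2) (hM0 : 0 ≤ M) :
    M + a*b ≤ 1/18 := by
  subst hM
  nlinarith [sq_nonneg (a+b-1/3), sq_nonneg (a+b-2/3), sq_nonneg (a-1/3), sq_nonneg b,
    mul_nonneg hb (sub_nonneg.2 hab), mul_nonneg ha hb, sq_nonneg (a-b), mul_nonneg hα.le hb]

private lemma master (α n a b c p q r u w E : ℝ)
    (hα : 0 < α) (ha : 0 ≤ a) (hb : 0 ≤ b) (hc : 0 ≤ c)
    (hp : 0 ≤ p) (hq : 0 ≤ q) (hr : 0 ≤ r) (hu : 0 ≤ u) (hw : 0 ≤ w)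
    (hsum : a + b + c = n)
    (K1 : p + q + r ≤ a * n / 3)
    (K2 : u + w ≤ α * b * n / 3)
    (K3 : q ≤ a * b)
    (K4 : (5/9 + α) * n^2 ≤ p + 2*q + 2*r + u + 2*w + c^2)
    (K4' : (5/9 + α) * n^2 ≤ a * n / 3 + (n - a) * n)
    (hE1 : 2*E = p + 2*q + u)
    (hE2 : 2*E ≤ (a+b)^2) :
    E ≤ n^2 / 18 := by
  rcases le_or_gt (a + b) (n/3) with hcase | hcase
  · nlinarith [sq_nonneg (a+b)]
  · have hn0 : 0 < n := by nlinarith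
    have hn2 : (0:ℝ) < n^2 := by positivity
    have cancel : ∀ P Q : ℝ, P * n^2 ≤ Q * n^2 → P ≤ Q := by
      intro P Q h
      exact le_of_mul_le_mul_right (by linarith [h]) hn2
    set x := a / n with hx
    set y := b / n with hy
    have hxa : a = x * n := by rw [hx, div_mul_cancel₀ _ hn0.ne']
    have hyb : b = y * n := by rw [hy, div_mul_cancel₀ _ hn0.ne']
    have hzc : c = (1 - x - y) * n := by
      have h : c = n - a - b := by linarith
      rw [h, hxa, hyb]; ring
    have hx0 : 0 ≤ x := div_nonneg ha hn0.le
    have hy0 : 0 ≤ y := div_nonneg hb hn0.le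
    have hxy1 : x + y ≤ 1 := by
      have h : (x + y) * n ≤ 1 * n := by rw [hxa, hyb] at hsum; linarith
      exact le_of_mul_le_mul_right (by linarith [h]) hn0
    have hx2 : x ≤ 2/3 - 3*α/2 := by
      have h : (5/9 + α) * n^2 ≤ (1 - 2*x/3) * n^2 := by
        rw [hxa] at K4'; linarith [K4']
      have := cancel _ _ h
      linarith
    have hs13 : 1/3 ≤ x + y := by
      have h : (1/3) * n < (x + y) * n := by
        rw [hxa, hyb] at hcase; linarith
      have := lt_of_mul_lt_mul_right h hn0.le
      linarith
    have hM0 : (0:ℝ) ≤ x/3 + α*y/3 + (1-x-y)^2/2 - 5/18 - α/2 := by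
      have h5 : (5/9 + α) * n^2 ≤ (2*x/3 + 2*α*y/3 + (1-x-y)^2) * n^2 := by
        rw [hzc] at K4; rw [hxa] at K1; rw [hyb] at K2
        linarith [K4, K1, K2, hp, hu]
      have := cancel _ _ h5
      linarith
    have hkey := key α x y _ hα hx0 hy0 hxy1 hx2 hs13 rfl hM0
    have h18 : x/3 + α*y/3 + (1-x-y)^2/2 + x*y ≤ 1/3 + α/2 := by linarith
    have hG2 : 2*a*n/3 + 2*α*b*n/3 + 2*(a*b) + c^2 ≤ (2/3 + α) * n^2 := by
      rw [hxa, hyb, hzc]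
      linarith [mul_le_mul_of_nonneg_right h18 (sq_nonneg n)]
    linarith

open Finset

set_option maxHeartbeats 1600000

/-- Lemma 2.4: if `G` has at least `(5/9 + α) n² / 2` edges, `A` is the set of vertices of
degree less than `n/3` and `B` the set of vertices with at most `αn/3` neighbours outside `A`,
then at most `n²/18` edges of `G` have both endpoints in `A ∪ B`. -/
theorem stmt0 {V : Type*} [Fintype V] (n : ℕ) (hn : Fintype.card V = n)
    (α : ℝ) (hα : 0 < α) (G : SimpleGraph V)
    (hE : (5 / 9 + α) * (n : ℝ) ^ 2 / 2 ≤ (G.edgeSet.ncard : ℝ))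
    (A B : Set V)
    (hA : A = {x : V | ((G.neighborSet x).ncard : ℝ) < (n : ℝ) / 3})
    (hB : B = {x : V | (((G.neighborSet x) \ A).ncard : ℝ) ≤ α * (n : ℝ) / 3}) :
    (({e : Sym2 V | e ∈ G.edgeSet ∧ ∀ v ∈ e, v ∈ A ∪ B} : Set (Sym2 V)).ncard : ℝ)
      ≤ (n : ℝ) ^ 2 / 18 := by
  classical
  -- vertex class finsets
  set PA : V → Prop := fun v => v ∈ A with hPA
  set PB : V → Prop := fun v => v ∈ B ∧ v ∉ A with hPB
  set PC : V → Prop := fun v => v ∉ A ∧ v ∉ B with hPC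
  set PS : V → Prop := fun v => v ∈ A ∪ B with hPS
  set FF : (V → Prop) → Finset V := fun X => Finset.univ.filter (fun v => X v) with hFF
  set DD : (V → Prop) → (V → Prop) → ℕ := fun X Y =>
    (Finset.univ.filter (fun d : G.Dart => X d.fst ∧ Y d.snd)).card with hDD
  -- basic DD lemmas
  have DDcongr : ∀ X X' Y Y' : V → Prop, (∀ v, X v ↔ X' v) → (∀ v, Y v ↔ Y' v) →
      DD X Y = DD X' Y' := by
    intro X X' Y Y' h1 h2
    simp only [hDD]
    congr 1
    apply Finset.filter_congr
    intro d _
    rw [h1, h2]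
  have DDsymm : ∀ X Y : V → Prop, DD X Y = DD Y X := by
    intro X Y
    simp only [hDD]
    refine Finset.card_bij' (fun d _ => d.symm) (fun d _ => d.symm) ?_ ?_ ?_ ?_
    · intro d hd
      simp only [Finset.mem_filter, Finset.mem_univ, true_and] at hd ⊢
      exact ⟨hd.2, hd.1⟩
    · intro d hd
      simp only [Finset.mem_filter, Finset.mem_univ, true_and] at hd ⊢
      exact ⟨hd.2, hd.1⟩
    · intro d _; exact SimpleGraph.Dart.symm_symm d
    · intro d _; exact SimpleGraph.Dart.symm_symm d
  have DDaddY : ∀ X Y1 Y2 : V → Prop, (∀ v, ¬ (Y1 v ∧ Y2 v)) →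
      DD X (fun v => Y1 v ∨ Y2 v) = DD X Y1 + DD X Y2 := by
    intro X Y1 Y2 hdisj
    simp only [hDD]
    rw [← Finset.card_union_of_disjoint]
    · congr 1
      ext d
      simp only [Finset.mem_union, Finset.mem_filter, Finset.mem_univ, true_and]
      tauto
    · rw [Finset.disjoint_left]
      intro d hd1 hd2
      simp only [Finset.mem_filter, Finset.mem_univ, true_and] at hd1 hd2
      exact hdisj d.snd ⟨hd1.2, hd2.2⟩
  have DDaddX : ∀ X1 X2 Y : V → Prop, (∀ v, ¬ (X1 v ∧ X2 v)) →
      DD (fun v => X1 v ∨ X2 v) Y = DD X1 Y + DD X2 Y := by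
    intro X1 X2 Y hdisj
    rw [DDsymm (fun v => X1 v ∨ X2 v) Y, DDaddY Y X1 X2 hdisj, DDsymm Y X1, DDsymm Y X2]
  have DDle : ∀ X Y : V → Prop, DD X Y ≤ (FF X).card * (FF Y).card := by
    intro X Y
    simp only [hDD, hFF]
    rw [← Finset.card_product]
    apply Finset.card_le_card_of_injOn (fun d => (d.fst, d.snd))
    · intro d hd
      simp only [Finset.mem_coe, Finset.mem_filter, Finset.mem_univ, true_and] at hd
      simp only [Finset.mem_coe, Finset.mem_product, Finset.mem_filter, Finset.mem_univ, true_and]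
      exact hd
    · intro d1 _ d2 _ h
      exact SimpleGraph.Dart.toProd_injective h
  have DDfiber : ∀ X Y : V → Prop,
      DD X Y = ∑ v ∈ FF X, ((G.neighborFinset v).filter (fun y => Y y)).card := by
    intro X Y
    simp only [hDD, hFF]
    rw [Finset.card_eq_sum_card_fiberwise (f := fun d : G.Dart => d.fst)
      (t := Finset.univ.filter (fun v => X v))
      (fun d hd => by
        simp only [Finset.mem_coe, Finset.mem_filter, Finset.mem_univ, true_and] at hd ⊢
        exact hd.1)]
    apply Finset.sum_congr rfl
    intro v hv
    simp only [Finset.mem_filter, Finset.mem_univ, true_and] at hv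
    refine Finset.card_bij' (fun d _ => d.snd)
      (fun y hy => (⟨(v, y), by
        have := (Finset.mem_filter.mp hy).1
        exact (SimpleGraph.mem_neighborFinset G v y).mp this⟩ : G.Dart)) ?_ ?_ ?_ ?_
    · intro d hd
      obtain ⟨hd1, hfst⟩ := Finset.mem_filter.mp hd
      obtain ⟨-, hX, hY⟩ := Finset.mem_filter.mp hd1
      exact Finset.mem_filter.mpr ⟨(SimpleGraph.mem_neighborFinset G v _).mpr (hfst ▸ d.adj), hY⟩
    · intro y hy
      have h2 := (Finset.mem_filter.mp hy).2
      exact Finset.mem_filter.mpr ⟨Finset.mem_filter.mpr ⟨Finset.mem_univ _, hv, h2⟩, rfl⟩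
    · intro d hd
      simp only [Finset.mem_filter, Finset.mem_univ, true_and] at hd
      apply SimpleGraph.Dart.ext
      rw [Prod.ext_iff]
      exact ⟨hd.2.symm, rfl⟩
    · intro y hy; rfl
  -- predicate disjointness / coverage facts
  have dAB : ∀ v, ¬ (PA v ∧ PB v) := by intro v; simp only [hPA, hPB]; tauto
  have dAC : ∀ v, ¬ (PA v ∧ PC v) := by intro v; simp only [hPA, hPC]; tauto
  have dBC : ∀ v, ¬ (PB v ∧ PC v) := by intro v; simp only [hPB, hPC]; tauto
  have dA_BC : ∀ v, ¬ (PA v ∧ (PB v ∨ PC v)) := by intro v; simp only [hPA, hPB, hPC]; tauto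
  have covT : ∀ v : V, True ↔ (PA v ∨ (PB v ∨ PC v)) := by
    intro v; simp only [hPA, hPB, hPC]; tauto
  have covS : ∀ v, PS v ↔ (PA v ∨ PB v) := by
    intro v; simp only [hPA, hPB, hPS, Set.mem_union]; tauto
  have covNA : ∀ v, (¬ v ∈ A) ↔ (PB v ∨ PC v) := by
    intro v; simp only [hPB, hPC]; tauto
  -- generalized additivity
  have DDaddY' : ∀ X Y1 Y2 Y3 : V → Prop, (∀ v, Y3 v ↔ (Y1 v ∨ Y2 v)) →
      (∀ v, ¬ (Y1 v ∧ Y2 v)) → DD X Y3 = DD X Y1 + DD X Y2 := by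
    intro X Y1 Y2 Y3 h3 hdisj
    have h := DDcongr X X Y3 (fun v => Y1 v ∨ Y2 v) (fun _ => Iff.rfl) h3
    rw [h, DDaddY X Y1 Y2 hdisj]
  have DDaddX' : ∀ X1 X2 X3 Y : V → Prop, (∀ v, X3 v ↔ (X1 v ∨ X2 v)) →
      (∀ v, ¬ (X1 v ∧ X2 v)) → DD X3 Y = DD X1 Y + DD X2 Y := by
    intro X1 X2 X3 Y h3 hdisj
    rw [DDsymm X3 Y, DDaddY' Y X1 X2 X3 h3 hdisj, DDsymm Y X1, DDsymm Y X2]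
  have memFF : ∀ (X : V → Prop) (v : V), v ∈ FF X ↔ X v := by
    intro X v
    simp only [hFF, Finset.mem_filter, Finset.mem_univ, true_and]
  set FnA : Finset V := Finset.univ.filter (fun v => ¬ PA v) with hFnA
  have memFnA : ∀ v : V, v ∈ FnA ↔ ¬ PA v := by
    intro v
    simp only [hFnA, Finset.mem_filter, Finset.mem_univ, true_and]
  have hunionA : FF PA ∪ FnA = Finset.univ := by
    ext v
    simp only [Finset.mem_union, Finset.mem_univ, iff_true]
    rcases Classical.em (PA v) with h | h
    · exact Or.inl ((memFF PA v).mpr h)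
    · exact Or.inr ((memFnA v).mpr h)
  have hdisjA : Disjoint (FF PA) FnA := by
    rw [Finset.disjoint_left]
    intro v h1 h2
    exact (memFnA v).mp h2 ((memFF PA v).mp h1)
  -- names for the numbers
  set a := (FF PA).card with hha
  set b := (FF PB).card with hhb
  set c := (FF PC).card with hhc
  set p := DD PA PA with hhp
  set q := DD PA PB with hhq
  set r := DD PA PC with hhr
  set u := DD PB PB with hhu
  set w := DD PB PC with hhw
  set xcc := DD PC PC with hhx
  -- a + b + c = n
  have hsplitA : a + FnA.card = n := by
    rw [hha, ← Finset.card_union_of_disjoint hdisjA, hunionA, Finset.card_univ, hn]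
  have hsplitBC : b + c = FnA.card := by
    rw [hhb, hhc, ← Finset.card_union_of_disjoint]
    · apply congrArg Finset.card
      ext v
      rw [Finset.mem_union, memFF PB v, memFF PC v, memFnA v]
      have h := covNA v
      simp only [hPA]
      tauto
    · rw [Finset.disjoint_left]
      intro v h1 h2
      exact dBC v ⟨(memFF PB v).mp h1, (memFF PC v).mp h2⟩
  have habc : a + b + c = n := by omega
  -- ncard ↔ finset card conversions
  have hdegEq : ∀ v : V, (G.neighborSet v).ncard = G.degree v := by
    intro v
    calc (G.neighborSet v).ncard = (G.neighborSet v).toFinset.card :=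
        Set.ncard_eq_toFinset_card' _
      _ = (G.neighborFinset v).card := congrArg Finset.card (by
          ext x; simp [SimpleGraph.mem_neighborFinset])
      _ = G.degree v := rfl
  have hBEq : ∀ v : V, ((G.neighborSet v) \ A).ncard
      = ((G.neighborFinset v).filter (fun y => ¬ y ∈ A)).card := by
    intro v
    calc ((G.neighborSet v) \ A).ncard = ((G.neighborSet v) \ A).toFinset.card :=
        Set.ncard_eq_toFinset_card' _
      _ = ((G.neighborFinset v).filter (fun y => ¬ y ∈ A)).card := congrArg Finset.card (by
          ext x; simp [SimpleGraph.mem_neighborFinset])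
  have hedgeEq : G.edgeSet.ncard = G.edgeFinset.card := by
    calc G.edgeSet.ncard = G.edgeSet.toFinset.card := Set.ncard_eq_toFinset_card' _
      _ = G.edgeFinset.card := congrArg Finset.card (by
          ext e; simp [SimpleGraph.mem_edgeFinset])
  -- K1 : sum of degrees over A
  have hPAtop : DD PA (fun _ => True) = p + q + r := by
    rw [DDaddY' PA PA (fun v => PB v ∨ PC v) _ covT dA_BC,
      DDaddY PA PB PC dBC, hhp, hhq, hhr]
    omega
  have hdegsumA : DD PA (fun _ => True) = ∑ v ∈ FF PA, G.degree v := by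
    rw [DDfiber PA (fun _ => True)]
    apply Finset.sum_congr rfl
    intro v _
    have h2 : G.degree v = (G.neighborFinset v).card := rfl
    rw [h2]
    exact congrArg Finset.card (by ext x; simp)
  have hAdeg : ∀ v ∈ FF PA, (G.degree v : ℝ) ≤ (n : ℝ)/3 := by
    intro v hv
    have hvA : v ∈ A := (memFF PA v).mp hv
    rw [hA] at hvA
    have h1 : ((G.neighborSet v).ncard : ℝ) < (n : ℝ)/3 := hvA
    rw [hdegEq v] at h1
    exact h1.le
  have K1R : ((p : ℝ) + q + r) ≤ (a : ℝ) * n / 3 := by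
    have h1 : ((p + q + r : ℕ) : ℝ) = ((∑ v ∈ FF PA, G.degree v : ℕ) : ℝ) := by
      rw [← hPAtop, hdegsumA]
    push_cast at h1
    have h2 : ∑ v ∈ FF PA, (G.degree v : ℝ) ≤ (FF PA).card • ((n : ℝ)/3) :=
      Finset.sum_le_card_nsmul _ _ _ hAdeg
    rw [nsmul_eq_mul] at h2
    rw [← hha] at h2
    calc ((p : ℝ) + q + r) = ∑ v ∈ FF PA, (G.degree v : ℝ) := h1
      _ ≤ (a : ℝ) * ((n : ℝ)/3) := h2
      _ = (a : ℝ) * n / 3 := by ring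
  -- K2 : out-neighbour sums over B'
  have hPBout : DD PB (fun v => ¬ v ∈ A) = u + w := by
    rw [DDaddY' PB PB PC _ covNA dBC, hhu, hhw]
  have hBdeg : ∀ v ∈ FF PB,
      ((((G.neighborFinset v).filter (fun y => ¬ y ∈ A)).card : ℕ) : ℝ) ≤ α * n / 3 := by
    intro v hv
    have hvB : v ∈ B := ((memFF PB v).mp hv).1
    rw [hB] at hvB
    have h1 : (((G.neighborSet v) \ A).ncard : ℝ) ≤ α * n / 3 := hvB
    rwa [hBEq v] at h1
  have K2R : ((u : ℝ) + w) ≤ α * b * n / 3 := by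
    have h1 : ((u + w : ℕ) : ℝ)
        = ((∑ v ∈ FF PB, ((G.neighborFinset v).filter (fun y => ¬ y ∈ A)).card : ℕ) : ℝ) := by
      rw [← hPBout, DDfiber PB (fun v => ¬ v ∈ A)]
      congr 1
      apply Finset.sum_congr rfl
      intro v _
      exact congrArg Finset.card (by ext x; simp)
    push_cast at h1
    have h2 : ∑ v ∈ FF PB, ((((G.neighborFinset v).filter (fun y => ¬ y ∈ A)).card : ℕ) : ℝ)
        ≤ (FF PB).card • (α * (n : ℝ) / 3) := by
      apply Finset.sum_le_card_nsmul
      intro v hv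
      exact hBdeg v hv
    rw [nsmul_eq_mul, ← hhb] at h2
    calc ((u : ℝ) + w) = _ := h1
      _ ≤ (b : ℝ) * (α * (n : ℝ) / 3) := h2
      _ = α * b * n / 3 := by ring
  -- K3
  have K3nat : q ≤ a * b := by rw [hhq, hha, hhb]; exact DDle PA PB
  -- total darts
  have hTot : Fintype.card G.Dart = DD (fun _ => True) (fun _ => True) := by
    rw [hDD, ← Finset.card_univ]
    congr 1
    ext d
    simp
  have hTot2 : Fintype.card G.Dart = (p + q + r) + (q + u + w) + (r + w + xcc) := by
    rw [hTot, DDaddX' PA (fun v => PB v ∨ PC v) (fun _ => True) (fun _ => True) covT dA_BC,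
      DDaddX PB PC (fun _ => True) dBC]
    have e2 : DD PB (fun _ => True) = q + u + w := by
      rw [DDaddY' PB PA (fun v => PB v ∨ PC v) _ covT dA_BC,
        DDaddY PB PB PC dBC, DDsymm PB PA, hhq, hhu, hhw]
      omega
    have e3 : DD PC (fun _ => True) = r + w + xcc := by
      rw [DDaddY' PC PA (fun v => PB v ∨ PC v) _ covT dA_BC,
        DDaddY PC PB PC dBC, DDsymm PC PA, DDsymm PC PB, hhr, hhw, hhx]
      omega
    rw [hPAtop, e2, e3]
    omega
  have hdart2m : Fintype.card G.Dart = 2 * G.edgeFinset.card :=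
    SimpleGraph.dart_card_eq_twice_card_edges G
  have hxccle : xcc ≤ c * c := by
    rw [hhx, hhc]
    exact DDle PC PC
  -- K4
  have K4R : (5/9 + α) * (n : ℝ)^2 ≤ (p : ℝ) + 2*q + 2*r + u + 2*w + (c : ℝ)^2 := by
    have hm : (5/9 + α) * (n : ℝ)^2 ≤ 2 * (G.edgeFinset.card : ℝ) := by
      rw [← hedgeEq]
      calc (5/9 + α) * (n : ℝ)^2 = 2 * ((5 / 9 + α) * (n : ℝ) ^ 2 / 2) := by ring
        _ ≤ 2 * (G.edgeSet.ncard : ℝ) := by linarith [hE]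
    have h2 : (2 * G.edgeFinset.card : ℕ) = (p + q + r) + (q + u + w) + (r + w + xcc) := by
      rw [← hdart2m, hTot2]
    have h3 : ((2 * G.edgeFinset.card : ℕ) : ℝ)
        = ((p : ℝ) + q + r) + ((q : ℝ) + u + w) + ((r : ℝ) + w + xcc) := by
      rw [h2]; push_cast; ring
    have h4 : ((xcc : ℕ) : ℝ) ≤ (c : ℝ)^2 := by
      have h5 : ((xcc : ℕ) : ℝ) ≤ ((c * c : ℕ) : ℝ) := Nat.cast_le.mpr hxccle
      push_cast at h5
      calc ((xcc : ℕ) : ℝ) ≤ (c : ℝ) * c := h5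
        _ = (c : ℝ)^2 := (sq (c : ℝ)).symm
    push_cast at h3
    linarith [hm, h3, h4]
  -- K4'
  have K4R' : (5/9 + α) * (n : ℝ)^2 ≤ (a : ℝ) * n / 3 + ((n : ℝ) - a) * n := by
    have hsum : ∑ v : V, G.degree v = 2 * G.edgeFinset.card :=
      SimpleGraph.sum_degrees_eq_twice_card_edges G
    have hsplit : ∑ v : V, (G.degree v : ℝ)
        = ∑ v ∈ FF PA, (G.degree v : ℝ) + ∑ v ∈ FnA, (G.degree v : ℝ) := by
      rw [← Finset.sum_union hdisjA, hunionA]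
    have hdub : ∀ v ∈ FnA, (G.degree v : ℝ) ≤ (n : ℝ) := by
      intro v _
      have h1 : G.degree v ≤ n := by
        rw [← hn, ← Finset.card_univ]
        exact Finset.card_le_univ _
      exact_mod_cast h1
    have hsum2 : ∑ v ∈ FnA, (G.degree v : ℝ) ≤ (FnA.card : ℝ) * n := by
      have h6 := Finset.sum_le_card_nsmul FnA
        (fun v => (G.degree v : ℝ)) ((n : ℝ)) hdub
      rwa [nsmul_eq_mul] at h6
    have hcardna : ((FnA.card : ℕ) : ℝ) = (n : ℝ) - a := by
      have h7 := congrArg (fun k : ℕ => (k : ℝ)) hsplitA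
      push_cast at h7
      linarith
    have hsumA : ∑ v ∈ FF PA, (G.degree v : ℝ) ≤ (a : ℝ) * n / 3 := by
      have h2 : ∑ v ∈ FF PA, (G.degree v : ℝ) ≤ (FF PA).card • ((n : ℝ)/3) :=
        Finset.sum_le_card_nsmul _ _ _ hAdeg
      rw [nsmul_eq_mul, ← hha] at h2
      calc ∑ v ∈ FF PA, (G.degree v : ℝ) ≤ (a : ℝ) * ((n : ℝ)/3) := h2
        _ = (a : ℝ) * n / 3 := by ring
    have hcast : ((∑ v : V, G.degree v : ℕ) : ℝ) = ∑ v : V, (G.degree v : ℝ) := by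
      push_cast
      rfl
    have hm : (5/9 + α) * (n : ℝ)^2 ≤ ∑ v : V, (G.degree v : ℝ) := by
      rw [← hcast, hsum, ← hedgeEq]  
      push_cast
      calc (5/9 + α) * (n : ℝ)^2 = 2 * ((5 / 9 + α) * (n : ℝ) ^ 2 / 2) := by ring
        _ ≤ 2 * (G.edgeSet.ncard : ℝ) := by linarith [hE]
    rw [hsplit] at hm
    rw [hcardna] at hsum2
    linarith
  -- edges inside S
  have hSS : DD PS PS = p + 2*q + u := by
    rw [DDaddX' PA PB PS PS covS dAB]
    have e1 : DD PA PS = p + q := by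
      rw [DDaddY' PA PA PB PS covS dAB, hhp, hhq]
    have e2 : DD PB PS = q + u := by
      rw [DDaddY' PB PA PB PS covS dAB, DDsymm PB PA, hhq, hhu]
    rw [e1, e2]; ring
  have hFScard : (FF PS).card = a + b := by
    rw [hha, hhb, hFF, ← Finset.card_union_of_disjoint]
    · congr 1
      ext v
      simp only [Finset.mem_union, Finset.mem_filter, Finset.mem_univ, true_and]
      rw [covS v]
    · rw [Finset.disjoint_left]
      intro v h1 h2
      simp only [Finset.mem_filter, Finset.mem_univ, true_and] at h1 h2
      exact dAB v ⟨h1, h2⟩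
  have hE2nat : DD PS PS ≤ (a + b) * (a + b) := by
    calc DD PS PS ≤ (FF PS).card * (FF PS).card := DDle PS PS
      _ = (a + b) * (a + b) := by rw [hFScard]
  -- handshake for the goal edge set
  set goalF : Finset (Sym2 V) :=
    Finset.univ.filter (fun e : Sym2 V => e ∈ G.edgeSet ∧ ∀ v ∈ e, v ∈ A ∪ B) with hgoalF
  have hgoalcard : ({e : Sym2 V | e ∈ G.edgeSet ∧ ∀ v ∈ e, v ∈ A ∪ B} : Set (Sym2 V)).ncard
      = goalF.card := by
    calc ({e : Sym2 V | e ∈ G.edgeSet ∧ ∀ v ∈ e, v ∈ A ∪ B} : Set (Sym2 V)).ncard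
        = ({e : Sym2 V | e ∈ G.edgeSet ∧ ∀ v ∈ e, v ∈ A ∪ B} : Set (Sym2 V)).toFinset.card :=
        Set.ncard_eq_toFinset_card' _
      _ = goalF.card := congrArg Finset.card (by
          ext e; simp [hgoalF])
  have hedgefs : ∀ d : G.Dart, d.edge = s(d.fst, d.snd) := fun d => rfl
  have hmemedge : ∀ d : G.Dart, (∀ v ∈ d.edge, v ∈ A ∪ B) ↔ (PS d.fst ∧ PS d.snd) := by
    intro d
    rw [hedgefs d]
    constructor
    · intro h
      exact ⟨h d.fst (Sym2.mem_mk_left _ _), h d.snd (Sym2.mem_mk_right _ _)⟩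
    · intro h v hv
      rcases Sym2.mem_iff.mp hv with h1 | h1
      · rw [h1]; exact h.1
      · rw [h1]; exact h.2
  have hhand : DD PS PS = 2 * goalF.card := by
    have h2br : DD PS PS
        = (Finset.univ.filter (fun d : G.Dart => PS d.fst ∧ PS d.snd)).card := by
      simp only [hDD]
      exact congrArg Finset.card (by ext d; simp only [Finset.mem_filter])
    rw [h2br]
    have hstep : (Finset.univ.filter (fun d : G.Dart => PS d.fst ∧ PS d.snd)).card
        = ∑ _e ∈ goalF, 2 := by
      rw [Finset.card_eq_sum_card_fiberwise (f := fun d : G.Dart => d.edge) (t := goalF)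
        (fun d hd => by
          simp only [Finset.mem_coe, Finset.mem_filter, Finset.mem_univ, true_and] at hd
          rw [Finset.mem_coe, hgoalF, Finset.mem_filter]
          exact ⟨Finset.mem_univ _, d.edge_mem, (hmemedge d).mpr hd⟩)]
      apply Finset.sum_congr rfl
      intro e he
      rw [hgoalF, Finset.mem_filter] at he
      obtain ⟨-, heE, heS⟩ := he
      have hfib : (Finset.univ.filter (fun d : G.Dart => PS d.fst ∧ PS d.snd)).filter
          (fun d => d.edge = e) = Finset.univ.filter (fun d : G.Dart => d.edge = e) := by
        ext d
        simp only [Finset.mem_filter, Finset.mem_univ, true_and]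
        constructor
        · exact fun h => h.2
        · intro h
          refine ⟨(hmemedge d).mp ?_, h⟩
          rw [h]
          exact heS
      rw [hfib]
      have h2 := G.dart_edge_fiber_card e heE
      convert h2 using 2
    rw [hstep, Finset.sum_const, smul_eq_mul, mul_comm]
  -- final assembly
  rw [hgoalcard]
  have habcR : (a : ℝ) + b + c = n := by exact_mod_cast habc
  have K3R : (q : ℝ) ≤ (a : ℝ) * b := by exact_mod_cast K3nat
  have hE1R : 2 * (goalF.card : ℝ) = (p : ℝ) + 2*q + u := by
    have h1 : ((2 * goalF.card : ℕ) : ℝ) = ((p + 2*q + u : ℕ) : ℝ) := by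
      rw [← hhand, hSS]
    push_cast at h1
    linarith
  have hE2R : 2 * (goalF.card : ℝ) ≤ ((a : ℝ) + b)^2 := by
    have h1 : ((2 * goalF.card : ℕ) : ℝ) ≤ (((a+b)*(a+b) : ℕ) : ℝ) := by
      exact_mod_cast (hhand ▸ hE2nat)
    push_cast at h1
    calc 2 * (goalF.card : ℝ) ≤ ((a : ℝ) + b) * ((a : ℝ) + b) := by linarith [h1]
      _ = ((a : ℝ) + b)^2 := (sq ((a : ℝ) + (b : ℝ))).symm
  exact master α n a b c p q r u w (goalF.card : ℝ) hα (Nat.cast_nonneg a)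
    (Nat.cast_nonneg b) (Nat.cast_nonneg c) (Nat.cast_nonneg p) (Nat.cast_nonneg q)
    (Nat.cast_nonneg r) (Nat.cast_nonneg u) (Nat.cast_nonneg w) habcR K1R K2R K3R K4R K4R'
    hE1R hE2R
end

section
/- Let Ψ be a k-uniform constellation, X ⊆ V(Ψ) with |X| ≥ (|V(Ψ)| + k − 2)/2, and Ψ' = Ψ[X] the induced subconstellation. If a (k−1)-tuple of distinct vertices of Ψ' is (2ζ)-leftconnectable in Ψ', then it is ζ-leftconnectable in Ψ. -/
open Finset

structure Constellation (V : Type*) [DecidableEq V] where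
  verts : Finset V
  edges : Finset (Finset V)
  W : Finset V → Finset V

namespace Constellation

variable {V : Type*} [DecidableEq V]

/-- The link constellation `Ψ_S`. -/
def link (Ψ : Constellation V) (S : Finset V) : Constellation V where
  verts := Ψ.verts \ S
  edges := (Ψ.edges.filter fun e => S ⊆ e).image (· \ S)
  W := fun x => Ψ.W (x ∪ S) \ S

/-- The induced subconstellation `Ψ[X]`. -/
def induce (Ψ : Constellation V) (X : Finset V) : Constellation V where
  verts := Ψ.verts ∩ X
  edges := Ψ.edges.filter fun e => e ⊆ X
  W := fun x => Ψ.W x ∩ X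

/-- `Ψ - X`. -/
def remove (Ψ : Constellation V) (X : Finset V) : Constellation V :=
  Ψ.induce (Ψ.verts \ X)

end Constellation

/-- `Ψ` is a `k`-uniform constellation. -/
def IsUniformConst {V : Type*} [DecidableEq V] (k : ℕ) (Ψ : Constellation V) : Prop :=
  ∀ e ∈ Ψ.edges, e ⊆ Ψ.verts ∧ e.card = k

/-- `ζ`-leftconnectability of a `(k-1)`-tuple (as a list) in a `k`-uniform constellation. -/
def LeftConn {V : Type*} [DecidableEq V] : ℕ → Constellation V → ℝ → List V → Prop
  | 0, _, _, _ => False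
  | 1, _, _, _ => False
  | 2, Ψ, _, xs => xs.length = 1 ∧ ∀ v ∈ xs, v ∈ Ψ.W ∅
  | (k + 3), Ψ, ζ, xs =>
      xs.length = k + 2 ∧
      ζ * (Ψ.verts.card : ℝ) ≤
        (({z : V | z ∈ Ψ.verts ∧ insert z xs.toFinset ∈ Ψ.edges ∧
            LeftConn (k + 2) (Ψ.link {z}) ζ xs.tail} : Set V).ncard : ℝ)

def RightConn {V : Type*} [DecidableEq V] (k : ℕ) (Ψ : Constellation V) (ζ : ℝ)
    (xs : List V) : Prop :=
  LeftConn k Ψ ζ xs.reverse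

def Conn {V : Type*} [DecidableEq V] (k : ℕ) (Ψ : Constellation V) (ζ : ℝ)
    (xs : List V) : Prop :=
  LeftConn k Ψ ζ xs ∧ RightConn k Ψ ζ xs

/-- A `ζ`-bridge. -/
def IsBridge {V : Type*} [DecidableEq V] (k : ℕ) (Ψ : Constellation V) (ζ : ℝ)
    (x : Fin k → V) : Prop :=
  Finset.image x Finset.univ ∈ Ψ.edges ∧
  RightConn k Ψ ζ (List.ofFn x).dropLast ∧
  LeftConn k Ψ ζ (List.ofFn x).tail

/-- number of edges of the link graph of `x` crossing between `V(R_x)` and its complement. -/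
def crossCount {V : Type*} [DecidableEq V] (Ψ : Constellation V) (x : Finset V) : ℕ :=
  ((Ψ.link x).edges.filter fun p => (p ∩ Ψ.W x).Nonempty ∧ (p \ Ψ.W x).Nonempty).card

/-- `Ψ` is an `(α, μ)`-constellation. -/
def IsAMConst {V : Type*} [DecidableEq V] (k : ℕ) (Ψ : Constellation V) (α μ : ℝ) : Prop :=
  IsUniformConst k Ψ ∧
  ∀ x : Finset V, x ⊆ Ψ.verts → x.card = k - 2 →
    ((5 / 9 + α) * (Ψ.verts.card : ℝ) ^ 2 / 2 ≤
        ((Ψ.edges.filter fun e => x ⊆ e).card : ℝ)) ∧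
    Ψ.W x ⊆ Ψ.verts ∧
    ((2 / 3 + α / 2) * (Ψ.verts.card : ℝ) ≤ ((Ψ.W x).card : ℝ)) ∧
    ((crossCount Ψ x : ℝ) ≤ μ * (Ψ.verts.card : ℝ) ^ 2)

/-- number of `y`-`z`-paths of length `ℓ` in `R_x`. -/
noncomputable def pathCount {V : Type*} [DecidableEq V] (Ψ : Constellation V) (x : Finset V)
    (y z : V) (ℓ : ℕ) : ℕ :=
  ({ l : List V | l.length = ℓ + 1 ∧ l.Nodup ∧ (∀ v ∈ l, v ∈ Ψ.W x) ∧
      l.head? = some y ∧ l.getLast? = some z ∧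
      l.Chain' (fun u v => ({u, v} : Finset V) ∈ (Ψ.link x).edges) } : Set (List V)).ncard

/-- `Ψ` is an `(α, β, ℓ, μ)`-constellation. -/
def IsConst {V : Type*} [DecidableEq V] (k : ℕ) (Ψ : Constellation V)
    (α β : ℝ) (ℓ : ℕ) (μ : ℝ) : Prop :=
  IsAMConst k Ψ α μ ∧
  ∀ x : Finset V, x ⊆ Ψ.verts → x.card = k - 2 →
    ∀ y ∈ Ψ.W x, ∀ z ∈ Ψ.W x, y ≠ z →
      β * (Ψ.verts.card : ℝ) ^ (ℓ - 1) ≤ (pathCount Ψ x y z ℓ : ℝ)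

/-- `x` is a walk (of `m` vertices) in the `k`-uniform hypergraph with edge set `E`. -/
def IsWalk {V : Type*} [DecidableEq V] (E : Finset (Finset V)) (k m : ℕ)
    (x : Fin m → V) : Prop :=
  ∀ i : ℕ, ∀ h : i + k ≤ m,
    Finset.image (fun j : Fin k => x ⟨i + j.1, by have := j.2; omega⟩) Finset.univ ∈ E

/-- `l` is a path in the `k`-uniform hypergraph with edge set `E`. -/
def IsPathList {V : Type*} [DecidableEq V] (E : Finset (Finset V)) (k : ℕ)
    (l : List V) : Prop :=
  l.Nodup ∧ ∀ i : ℕ, i + k ≤ l.length → ((l.drop i).take k).toFinset ∈ E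

lemma induce_link_comm {V : Type*} [DecidableEq V] (Ψ : Constellation V) (X : Finset V)
    (z : V) (hz : z ∈ X) :
    (Ψ.induce X).link {z} = (Ψ.link {z}).induce (X \ {z}) := by
  unfold Constellation.link Constellation.induce
  congr 1
  · ext v; simp [Finset.mem_sdiff, Finset.mem_inter]; tauto
  · rw [Finset.filter_filter]
    ext e
    simp only [Finset.mem_filter, Finset.singleton_subset_iff]
    simp only [Finset.mem_image, Finset.mem_filter, Finset.singleton_subset_iff]
    constructor
    · rintro ⟨a, ⟨haE, haX, haz⟩, rfl⟩
      refine ⟨⟨a, ⟨haE, haz⟩, rfl⟩, fun v hv => ?_⟩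
      simp only [Finset.mem_sdiff, Finset.mem_singleton] at hv ⊢
      exact ⟨haX hv.1, hv.2⟩
    · rintro ⟨⟨a, ⟨haE, haz⟩, rfl⟩, heX⟩
      refine ⟨a, ⟨haE, fun v hv => ?_, haz⟩, rfl⟩
      by_cases hvz : v = z
      · exact hvz ▸ hz
      · exact (Finset.mem_sdiff.mp (heX (Finset.mem_sdiff.mpr ⟨hv, by simp [hvz]⟩))).1
  · funext x; ext v
    simp [Finset.mem_sdiff, Finset.mem_inter]; tauto

lemma stmt6_aux {V : Type*} [Fintype V] [DecidableEq V] (n : ℕ) :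
    ∀ (ζ : ℝ), 0 < ζ → ∀ (Ψ : Constellation V), IsUniformConst (n + 2) Ψ →
    ∀ (X : Finset V), X ⊆ Ψ.verts →
    ((Ψ.verts.card : ℝ) + ((n : ℝ) + 2) - 2) / 2 ≤ (X.card : ℝ) →
    ∀ (xs : List V), xs.length = n + 1 → xs.Nodup →
    (∀ v ∈ xs, v ∈ (Ψ.induce X).verts) →
    LeftConn (n + 2) (Ψ.induce X) (2 * ζ) xs → LeftConn (n + 2) Ψ ζ xs := by
  induction n with
  | zero =>
    intro ζ hζ Ψ hΨ X hX hsize xs hlen hnd hmem h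
    obtain ⟨h1, h2⟩ := h
    exact ⟨h1, fun v hv => (Finset.mem_inter.mp (h2 v hv)).1⟩
  | succ n ih =>
    intro ζ hζ Ψ hΨ X hX hsize xs hlen hnd hmem h
    obtain ⟨h1, h2⟩ := h
    refine ⟨h1, ?_⟩
    set S' : Set V := {z : V | z ∈ (Ψ.induce X).verts ∧
        insert z xs.toFinset ∈ (Ψ.induce X).edges ∧
        LeftConn (n + 2) ((Ψ.induce X).link {z}) (2 * ζ) xs.tail} with hS'
    set S : Set V := {z : V | z ∈ Ψ.verts ∧ insert z xs.toFinset ∈ Ψ.edges ∧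
        LeftConn (n + 2) (Ψ.link {z}) ζ xs.tail} with hS
    have hXcard : ((Ψ.induce X).verts.card : ℝ) = (X.card : ℝ) := by
      rw [Constellation.induce, Finset.inter_eq_right.mpr hX]
    have hsub : S' ⊆ S := by
      intro z hz
      obtain ⟨hzv, hze, hzl⟩ := hz
      have hzV : z ∈ Ψ.verts := (Finset.mem_inter.mp hzv).1
      have hzX : z ∈ X := (Finset.mem_inter.mp hzv).2
      have heE : insert z xs.toFinset ∈ Ψ.edges :=
        (Finset.mem_filter.mp hze).1
      have heX : insert z xs.toFinset ⊆ X := (Finset.mem_filter.mp hze).2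
      have hzxs : z ∉ xs := by
        intro hzin
        have hcard : (insert z xs.toFinset).card = n + 3 := (hΨ _ heE).2
        have : insert z xs.toFinset = xs.toFinset := by
          rw [Finset.insert_eq_self]; exact List.mem_toFinset.mpr hzin
        rw [this, List.toFinset_card_of_nodup hnd, h1] at hcard
        omega
      refine ⟨hzV, heE, ?_⟩
      -- apply ih to Ψ.link {z} and X \ {z}
      rw [induce_link_comm Ψ X z hzX] at hzl
      have hlinkU : IsUniformConst (n + 2) (Ψ.link {z}) := by
        intro e he
        simp only [Constellation.link, Finset.mem_image, Finset.mem_filter,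
          Finset.singleton_subset_iff] at he
        obtain ⟨a, ⟨haE, haz⟩, rfl⟩ := he
        obtain ⟨haV, hacard⟩ := hΨ a haE
        constructor
        · exact Finset.sdiff_subset_sdiff haV (le_refl _)
        · rw [Finset.card_sdiff_of_subset (Finset.singleton_subset_iff.mpr haz),
            Finset.card_singleton, hacard]
          omega
      have hlinkverts : (Ψ.link {z}).verts = Ψ.verts \ {z} := rfl
      have hXsub : X \ {z} ⊆ (Ψ.link {z}).verts :=
        Finset.sdiff_subset_sdiff hX (le_refl _)
      have hcardV : ((Ψ.link {z}).verts.card : ℝ) = (Ψ.verts.card : ℝ) - 1 := by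
        rw [hlinkverts, Finset.card_sdiff_of_subset (Finset.singleton_subset_iff.mpr hzV),
          Finset.card_singleton]
        have : 1 ≤ Ψ.verts.card := Finset.card_pos.mpr ⟨z, hzV⟩
        push_cast [Nat.cast_sub this]
        ring
      have hcardX : ((X \ {z}).card : ℝ) = (X.card : ℝ) - 1 := by
        rw [Finset.card_sdiff_of_subset (Finset.singleton_subset_iff.mpr hzX),
          Finset.card_singleton]
        have : 1 ≤ X.card := Finset.card_pos.mpr ⟨z, hzX⟩
        push_cast [Nat.cast_sub this]
        ring
      have hsize' : (((Ψ.link {z}).verts.card : ℝ) + ((n : ℝ) + 2) - 2) / 2 ≤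
          (((X \ {z}).card : ℝ)) := by
        rw [hcardV, hcardX]
        push_cast at hsize ⊢
        linarith
      have htlen : xs.tail.length = n + 1 := by
        rw [List.length_tail, h1]
        omega
      have htmem : ∀ v ∈ xs.tail, v ∈ ((Ψ.link {z}).induce (X \ {z})).verts := by
        intro v hv
        have hvxs : v ∈ xs := List.mem_of_mem_tail hv
        have hvz : v ≠ z := fun hvz => hzxs (hvz ▸ hvxs)
        have := hmem v hvxs
        simp only [Constellation.induce, Constellation.link, Finset.mem_inter,
          Finset.mem_sdiff, Finset.mem_singleton] at this ⊢
        exact ⟨⟨this.1, hvz⟩, this.2, hvz⟩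
      exact ih ζ hζ (Ψ.link {z}) hlinkU (X \ {z}) hXsub hsize' xs.tail htlen
        hnd.tail htmem hzl
    have hmono : (S'.ncard : ℝ) ≤ (S.ncard : ℝ) := by
      exact_mod_cast Set.ncard_le_ncard hsub (Set.toFinite S)
    have hhalf : (Ψ.verts.card : ℝ) / 2 ≤ ((Ψ.induce X).verts.card : ℝ) := by
      rw [hXcard]
      have hn : (0:ℝ) ≤ (n:ℝ) := Nat.cast_nonneg n
      push_cast at hsize
      linarith
    calc ζ * (Ψ.verts.card : ℝ) ≤ 2 * ζ * ((Ψ.induce X).verts.card : ℝ) := by nlinarith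
      _ ≤ (S'.ncard : ℝ) := h2
      _ ≤ (S.ncard : ℝ) := hmono

/-- Fact 2.13: if `Ψ' = Ψ[X]` with `|X| ≥ (|V(Ψ)| + k - 2)/2`, then every `(2ζ)`-leftconnectable
`(k-1)`-tuple of distinct vertices of `Ψ'` is `ζ`-leftconnectable in `Ψ`. -/
theorem stmt6 {V : Type*} [Fintype V] [DecidableEq V] (k : ℕ) (hk : 2 ≤ k)
    (ζ : ℝ) (hζ : 0 < ζ)
    (Ψ : Constellation V) (hΨ : IsUniformConst k Ψ)
    (X : Finset V) (hX : X ⊆ Ψ.verts)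
    (hsize : ((Ψ.verts.card : ℝ) + (k : ℝ) - 2) / 2 ≤ (X.card : ℝ))
    (xs : List V) (hlen : xs.length = k - 1) (hnd : xs.Nodup)
    (hmem : ∀ v ∈ xs, v ∈ (Ψ.induce X).verts)
    (h : LeftConn k (Ψ.induce X) (2 * ζ) xs) : LeftConn k Ψ ζ xs := by
  obtain ⟨n, rfl⟩ : ∃ n, k = n + 2 := ⟨k - 2, by omega⟩
  exact stmt6_aux n ζ hζ Ψ hΨ X hX (by push_cast at hsize ⊢; linarith) xs
    (by omega) hnd hmem h
end

section
/- Let k ≥ 2, ζ > 0, and let Ψ be a k-uniform constellation on vertex set V(Ψ). Then the number of k-tuples (x₁,…,x_k) ∈ V(Ψ)^k such that {x₁,…,x_k} is an edge of Ψ, x_k is a vertex of the distinguished graph R^Ψ_{x₁…x_{k−2}}, and (x₂,…,x_k) fails to be ζ-leftconnectable in Ψ, is at most (k−2)·ζ·|V(Ψ)|^k. -/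
open Finset

section Test
variable {V : Type*} [DecidableEq V]

lemma LeftConn_succ (m : ℕ) (Ψ : Constellation V) (ζ : ℝ) (xs : List V) :
    LeftConn (m+3) Ψ ζ xs ↔ xs.length = m + 2 ∧
      ζ * (Ψ.verts.card : ℝ) ≤
        (({z : V | z ∈ Ψ.verts ∧ insert z xs.toFinset ∈ Ψ.edges ∧
            LeftConn (m + 2) (Ψ.link {z}) ζ xs.tail} : Set V).ncard : ℝ) :=
  Iff.rfl

lemma LeftConn_two (Ψ : Constellation V) (ζ : ℝ) (xs : List V) :
    LeftConn 2 Ψ ζ xs ↔ xs.length = 1 ∧ ∀ v ∈ xs, v ∈ Ψ.W ∅ :=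
  Iff.rfl

lemma ncard_setOf_eq_filter {α : Type*} [Fintype α] (p : α → Prop) [DecidablePred p] :
    ({x | p x} : Set α).ncard = (Finset.univ.filter p).card := by
  rw [← Set.toFinset_setOf]
  exact Set.ncard_eq_toFinset_card' _

lemma insert_image_succ {m : ℕ} (x : Fin (m+1) → V) :
    insert (x 0) (Finset.image (fun j : Fin m => x j.succ) Finset.univ) =
      Finset.image x Finset.univ := by
  ext v
  simp only [Finset.mem_insert, Finset.mem_image, Finset.mem_univ, true_and]
  constructor
  · rintro (rfl | ⟨j, rfl⟩)
    exacts [⟨0, rfl⟩, ⟨j.succ, rfl⟩]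
  · rintro ⟨i, rfl⟩
    rcases Fin.eq_zero_or_eq_succ i with rfl | ⟨j, rfl⟩
    · exact Or.inl rfl
    · exact Or.inr ⟨j, rfl⟩

lemma uniform_link {k : ℕ} {Ψ : Constellation V} (hΨ : IsUniformConst (k+1) Ψ) (z : V) :
    IsUniformConst k (Ψ.link {z}) := by
  rintro e' he'
  simp only [Constellation.link, Finset.mem_image, Finset.mem_filter] at he'
  obtain ⟨e, ⟨he, hsub⟩, rfl⟩ := he'
  obtain ⟨hev, hec⟩ := hΨ e he
  refine ⟨Finset.sdiff_subset_sdiff hev le_rfl, ?_⟩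
  rw [Finset.card_sdiff_of_subset hsub, hec, Finset.card_singleton]
  omega

lemma inj_of_edge {m : ℕ} {Ψ : Constellation V} (hΨ : IsUniformConst m Ψ)
    {x : Fin m → V} (hx : Finset.image x Finset.univ ∈ Ψ.edges) :
    Function.Injective x := by
  have hc : (Finset.image x (Finset.univ : Finset (Fin m))).card
      = (Finset.univ : Finset (Fin m)).card := by
    rw [(hΨ _ hx).2, Finset.card_univ, Fintype.card_fin]
  have h2 := Finset.injOn_of_card_image_eq hc
  rw [Finset.coe_univ] at h2
  exact fun a b h => h2 trivial trivial h

end Test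
section Test2
variable {V : Type*} [DecidableEq V]

def BadP (m : ℕ) (ζ : ℝ) (Ψ : Constellation V) (x : Fin (m+2) → V) : Prop :=
  (∀ i, x i ∈ Ψ.verts) ∧
  Finset.image x Finset.univ ∈ Ψ.edges ∧
  x ⟨m+1, by omega⟩ ∈
    Ψ.W (Finset.image (fun j : Fin m => x ⟨j.1, by have := j.2; omega⟩) Finset.univ) ∧
  ¬ LeftConn (m+2) Ψ ζ (List.ofFn fun j : Fin (m+1) => x ⟨j.1 + 1, by have := j.2; omega⟩)

lemma tail_bad {m : ℕ} {ζ : ℝ} {Ψ : Constellation V}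
    (hΨ : IsUniformConst (m+3) Ψ) {x : Fin (m+3) → V}
    (hx : BadP (m+1) ζ Ψ x)
    (hP : ¬ LeftConn (m+2) (Ψ.link {x 0}) ζ
      (List.ofFn fun j : Fin (m+1) => x ⟨j.1 + 2, by have := j.2; omega⟩)) :
    BadP m ζ (Ψ.link {x 0}) (Fin.tail x) := by
  obtain ⟨h1, h2, h3, h4⟩ := hx
  have hxinj : Function.Injective x := inj_of_edge hΨ h2
  have h0mem : x 0 ∉ Finset.image (fun j : Fin (m+2) => x j.succ) Finset.univ := by
    simp only [Finset.mem_image, Finset.mem_univ, true_and, not_exists]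
    intro j h
    exact Fin.succ_ne_zero j (hxinj h)
  refine ⟨?_, ?_, ?_, ?_⟩
  · intro i
    simp only [Constellation.link, Finset.mem_sdiff, Finset.mem_singleton]
    exact ⟨h1 _, fun h => Fin.succ_ne_zero i (hxinj h)⟩
  · simp only [Constellation.link, Finset.mem_image, Finset.mem_filter]
    refine ⟨Finset.image x Finset.univ, ⟨h2, ?_⟩, ?_⟩
    · rw [Finset.singleton_subset_iff]
      exact Finset.mem_image_of_mem x (Finset.mem_univ 0)
    · show Finset.image x Finset.univ \ {x 0} = Finset.image (Fin.tail x) Finset.univ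
      rw [← insert_image_succ x, Finset.sdiff_singleton_eq_erase,
        Finset.erase_insert h0mem]
      rfl
  · show Fin.tail x ⟨m+1, _⟩ ∈
      Ψ.W ((Finset.image (fun j : Fin m => Fin.tail x ⟨j.1, _⟩) Finset.univ) ∪ {x 0}) \ {x 0}
    have hu : (Finset.image (fun j : Fin m => Fin.tail x ⟨j.1, by have := j.2; omega⟩)
          Finset.univ) ∪ {x 0}
        = Finset.image (fun j : Fin (m+1) => x ⟨j.1, by have := j.2; omega⟩) Finset.univ := by
      rw [Finset.union_comm, ← Finset.insert_eq]
      exact insert_image_succ (fun j : Fin (m+1) => x ⟨j.1, by have := j.2; omega⟩)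
    rw [Finset.mem_sdiff, hu, Finset.mem_singleton]
    refine ⟨h3, ?_⟩
    intro h
    have := hxinj h
    simp [Fin.ext_iff] at this
  · exact hP

end Test2
section Test3

lemma aux_bad {V : Type*} [Fintype V] [DecidableEq V] (ζ : ℝ) (hζ : 0 < ζ) :
    ∀ (m : ℕ) (Ψ : Constellation V), IsUniformConst (m+2) Ψ →
      ((({x : Fin (m+2) → V | BadP m ζ Ψ x}).ncard : ℝ)) ≤
        (m : ℝ) * ζ * (Ψ.verts.card : ℝ) ^ (m+2) := by
  intro m
  induction m with
  | zero =>
    intro Ψ hΨ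
    have hempty : {x : Fin 2 → V | BadP 0 ζ Ψ x} = ∅ := by
      ext x
      simp only [Set.mem_setOf_eq, Set.mem_empty_iff_false, iff_false]
      rintro ⟨h1, h2, h3, h4⟩
      apply h4
      rw [LeftConn_two]
      refine ⟨by simp, ?_⟩
      intro v hv
      simp only [List.ofFn_succ, List.ofFn_zero, List.mem_cons, List.not_mem_nil,
        or_false] at hv
      subst hv
      have he : (Finset.image (fun j : Fin 0 => x ⟨j.1, by have := j.2; omega⟩)
          Finset.univ) = ∅ := by simp
      rw [he] at h3
      exact h3
    rw [hempty]
    norm_num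
  | succ m ih =>
    intro Ψ hΨ
    classical
    have hΨ3 : IsUniformConst (m+3) Ψ := hΨ
    set n : ℕ := Ψ.verts.card with hn
    have hn0 : (0:ℝ) ≤ (n:ℝ) := Nat.cast_nonneg n
    set P : (Fin (m+3) → V) → Prop := fun x =>
      LeftConn (m+2) (Ψ.link {x 0}) ζ
        (List.ofFn fun j : Fin (m+1) => x ⟨j.1 + 2, by have := j.2; omega⟩) with hPdef
    rw [ncard_setOf_eq_filter (BadP (m+1) ζ Ψ)]
    set B := Finset.univ.filter (BadP (m+1) ζ Ψ) with hB
    set A := B.filter P with hA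
    set C := B.filter (fun x => ¬ P x) with hC
    have hBmem : ∀ x ∈ B, BadP (m+1) ζ Ψ x := fun x hx => (Finset.mem_filter.mp hx).2
    have hsplit : A.card + C.card = B.card :=
      Finset.card_filter_add_card_filter_not _
    -- bound on A
    have hAbound : (A.card : ℝ) ≤ (n:ℝ)^(m+2) * (ζ * n) := by
      have hmaps : ∀ x ∈ A, Fin.tail x ∈ Fintype.piFinset (fun _ : Fin (m+2) => Ψ.verts) := by
        intro x hx
        rw [Fintype.mem_piFinset]
        intro i
        exact (hBmem x (Finset.filter_subset _ _ hx)).1 _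
      rw [Finset.card_eq_sum_card_fiberwise hmaps]
      push_cast
      have hfib : ∀ t ∈ Fintype.piFinset (fun _ : Fin (m+2) => Ψ.verts),
          ((A.filter fun a => Fin.tail a = t).card : ℝ) ≤ ζ * n := by
        intro t ht
        rcases (A.filter fun a => Fin.tail a = t).eq_empty_or_nonempty with he | ⟨x, hxmem⟩
        · rw [he]
          simpa using mul_nonneg hζ.le hn0
        · rw [Finset.mem_filter] at hxmem
          obtain ⟨hxA, hxt⟩ := hxmem
          obtain ⟨h1, h2, h3, h4⟩ := hBmem x (Finset.filter_subset _ _ hxA)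
          have hlist : (List.ofFn fun j : Fin (m+2) => x ⟨j.1 + 1, by have := j.2; omega⟩)
              = List.ofFn t := by
            rw [← hxt]
            rfl
          rw [hlist, LeftConn_succ] at h4
          have hlen : (List.ofFn t).length = m + 2 := by simp
          have h5 : ¬ (ζ * (n:ℝ) ≤
              ((({z : V | z ∈ Ψ.verts ∧ insert z (List.ofFn t).toFinset ∈ Ψ.edges ∧
                LeftConn (m+2) (Ψ.link {z}) ζ (List.ofFn t).tail} : Set V).ncard : ℝ))) :=
            fun hle => h4 ⟨hlen, hle⟩
          rw [ncard_setOf_eq_filter] at h5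
          have hle : (A.filter fun a => Fin.tail a = t).card ≤
              (Finset.univ.filter fun z : V => z ∈ Ψ.verts ∧
                insert z (List.ofFn t).toFinset ∈ Ψ.edges ∧
                LeftConn (m+2) (Ψ.link {z}) ζ (List.ofFn t).tail).card := by
            apply Finset.card_le_card_of_injOn (fun a => a 0)
            · intro a ha
              rw [Finset.mem_coe, Finset.mem_filter] at ha
              obtain ⟨haA, hat⟩ := ha
              have haB := hBmem a (Finset.filter_subset _ _ haA)
              have haP : P a := (Finset.mem_filter.mp haA).2
              rw [Finset.mem_coe, Finset.mem_filter]
              refine ⟨Finset.mem_univ _, haB.1 0, ?_, ?_⟩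
              · have hfin : (List.ofFn t).toFinset
                    = Finset.image (fun j : Fin (m+2) => a j.succ) Finset.univ := by
                  rw [← Fin.univ_image_def, ← hat]
                  rfl
                rw [hfin, insert_image_succ a]
                exact haB.2.1
              · have htail : (List.ofFn t).tail
                    = List.ofFn (fun j : Fin (m+1) => a ⟨j.1 + 2, by have := j.2; omega⟩) := by
                  rw [List.ofFn_succ, List.tail_cons, ← hat]
                  rfl
                rw [htail]
                exact haP
            · intro a ha b hb hab
              simp only [Finset.coe_filter, Set.mem_setOf_eq] at ha hb
              funext i
              rcases Fin.eq_zero_or_eq_succ i with rfl | ⟨j, rfl⟩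
              · exact hab
              · exact congrFun (ha.2.trans hb.2.symm) j
          calc ((A.filter fun a => Fin.tail a = t).card : ℝ)
              ≤ _ := Nat.cast_le.mpr hle
            _ ≤ ζ * n := le_of_not_ge h5
      calc (∑ t ∈ Fintype.piFinset (fun _ : Fin (m+2) => Ψ.verts),
              ((A.filter fun a => Fin.tail a = t).card : ℝ))
          ≤ ∑ _t ∈ Fintype.piFinset (fun _ : Fin (m+2) => Ψ.verts), ζ * (n:ℝ) :=
            Finset.sum_le_sum hfib
        _ = ((Fintype.piFinset (fun _ : Fin (m+2) => Ψ.verts)).card : ℝ) * (ζ * n) := by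
            rw [Finset.sum_const, nsmul_eq_mul]
        _ = (n:ℝ)^(m+2) * (ζ * n) := by
            rw [Fintype.card_piFinset]
            push_cast
            simp [Finset.prod_const]
            exact Or.inl rfl
    -- bound on C
    have hCbound : (C.card : ℝ) ≤ (n:ℝ) * ((m:ℝ) * ζ * (n:ℝ)^(m+2)) := by
      have hmaps : ∀ x ∈ C, x 0 ∈ Ψ.verts := fun x hx =>
        (hBmem x (Finset.filter_subset _ _ hx)).1 0
      rw [Finset.card_eq_sum_card_fiberwise hmaps]
      push_cast
      have hfib : ∀ z ∈ Ψ.verts,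
          ((C.filter fun a => a 0 = z).card : ℝ) ≤ (m:ℝ) * ζ * (n:ℝ)^(m+2) := by
        intro z hz
        have hlink := ih (Ψ.link {z}) (uniform_link hΨ3 z)
        rw [ncard_setOf_eq_filter] at hlink
        have hle : (C.filter fun a => a 0 = z).card ≤
            (Finset.univ.filter (BadP m ζ (Ψ.link {z}))).card := by
          apply Finset.card_le_card_of_injOn Fin.tail
          · intro a ha
            rw [Finset.mem_coe, Finset.mem_filter] at ha
            obtain ⟨haC, ha0⟩ := ha
            have haB := hBmem a (Finset.filter_subset _ _ haC)
            have haP : ¬ P a := (Finset.mem_filter.mp haC).2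
            rw [Finset.mem_coe, Finset.mem_filter]
            refine ⟨Finset.mem_univ _, ?_⟩
            have hbad := tail_bad hΨ3 haB haP
            rw [ha0] at hbad
            exact hbad
          · intro a ha b hb hab
            simp only [Finset.coe_filter, Set.mem_setOf_eq] at ha hb
            funext i
            rcases Fin.eq_zero_or_eq_succ i with rfl | ⟨j, rfl⟩
            · exact ha.2.trans hb.2.symm
            · exact congrFun hab j
        have hvc : (((Ψ.link {z}).verts.card : ℝ)) ≤ (n:ℝ) := by
          exact_mod_cast Finset.card_le_card (Finset.sdiff_subset)
        calc ((C.filter fun a => a 0 = z).card : ℝ)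
            ≤ _ := Nat.cast_le.mpr hle
          _ ≤ (m:ℝ) * ζ * (((Ψ.link {z}).verts.card : ℝ))^(m+2) := hlink
          _ ≤ (m:ℝ) * ζ * (n:ℝ)^(m+2) := by
              apply mul_le_mul_of_nonneg_left
                (pow_le_pow_left₀ (Nat.cast_nonneg _) hvc _)
                (mul_nonneg (Nat.cast_nonneg _) hζ.le)
      calc (∑ z ∈ Ψ.verts, ((C.filter fun a => a 0 = z).card : ℝ))
          ≤ ∑ _z ∈ Ψ.verts, (m:ℝ) * ζ * (n:ℝ)^(m+2) := Finset.sum_le_sum hfib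
        _ = (n:ℝ) * ((m:ℝ) * ζ * (n:ℝ)^(m+2)) := by
            rw [Finset.sum_const, nsmul_eq_mul]
    have hBAC : (B.card : ℝ) = (A.card : ℝ) + (C.card : ℝ) := by exact_mod_cast hsplit.symm
    have hpow : (n:ℝ)^(m+2) * (ζ * n) + (n:ℝ) * ((m:ℝ) * ζ * (n:ℝ)^(m+2))
        = ((m:ℝ)+1) * ζ * (n:ℝ)^(m+3) := by ring
    have hexp : (n:ℝ)^(m+1+2) = (n:ℝ)^(m+3) := rfl
    push_cast
    linarith [hAbound, hCbound, hBAC, hpow, hexp]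

end Test3

/-- Lemma 2.14: in a `k`-uniform constellation `Ψ` there are at most `(k-2) ζ |V(Ψ)|^k`
tuples `(x₁,…,x_k) ∈ V(Ψ)^k` such that `{x₁,…,x_k} ∈ E(Ψ)`, `x_k ∈ V(R_{x₁…x_{k-2}})`, and
`(x₂,…,x_k)` fails to be `ζ`-leftconnectable in `Ψ`. -/
theorem stmt7 {V : Type*} [Fintype V] [DecidableEq V] (k : ℕ) (hk : 2 ≤ k)
    (ζ : ℝ) (hζ : 0 < ζ)
    (Ψ : Constellation V) (hΨ : IsUniformConst k Ψ) :
    (({x : Fin k → V | (∀ i, x i ∈ Ψ.verts) ∧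
        Finset.image x Finset.univ ∈ Ψ.edges ∧
        x ⟨k - 1, by omega⟩ ∈
          Ψ.W (Finset.image (fun j : Fin (k - 2) => x ⟨j.1, by have := j.2; omega⟩)
            Finset.univ) ∧
        ¬ LeftConn k Ψ ζ
          (List.ofFn (fun j : Fin (k - 1) => x ⟨j.1 + 1, by have := j.2; omega⟩))} :
      Set (Fin k → V)).ncard : ℝ) ≤
      ((k : ℝ) - 2) * ζ * (Ψ.verts.card : ℝ) ^ k := by
  obtain ⟨m, rfl⟩ : ∃ m, k = m + 2 := ⟨k - 2, by omega⟩
  have h := aux_bad ζ hζ m Ψ hΨ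
  have hc : ((m+2 : ℕ) : ℝ) - 2 = (m : ℝ) := by push_cast; ring
  rw [hc]
  exact h
end

section
/- Let k ≥ 2, ζ > 0, and let Ψ be a k-uniform constellation. Then the number of walks x₁…x_{2k−3} in the underlying hypergraph H(Ψ) such that x_{k−1} ∈ V(R^Ψ_{x_k…x_{2k−3}}) but (x₁,…,x_{k−1}) fails to be ζ-leftconnectable in Ψ is at most (k−2)·ζ·|V(Ψ)|^{2k−3}. -/
open Finset

section AuxStmt8
set_option linter.unusedSectionVars false
variable {V : Type*} [DecidableEq V]

private lemma nodup_of_toFinset_card {l : List V} (h : l.toFinset.card = l.length) :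
    l.Nodup := by
  have h1 : l.dedup.length = l.length := by rwa [List.card_toFinset] at h
  rw [← (List.dedup_sublist l).eq_of_length h1]
  exact l.nodup_dedup

private lemma chain_exists (P : ℕ → Prop) (n : ℕ) (h0 : ¬ P 0) (hn : P n) :
    ∃ j < n, ¬ P j ∧ P (j+1) := by
  induction n with
  | zero => exact absurd hn h0
  | succ n ih =>
    by_cases h : P n
    · obtain ⟨j, hj, h⟩ := ih h
      exact ⟨j, by omega, h⟩
    · exact ⟨n, by omega, h, hn⟩

/-- iterated link of a constellation along a list -/
def linkL (Ψ : Constellation V) : List V → Constellation V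
  | [] => Ψ
  | a :: s => linkL (Ψ.link {a}) s

lemma linkL_append (Ψ : Constellation V) (s t : List V) :
    linkL Ψ (s ++ t) = linkL (linkL Ψ s) t := by
  induction s generalizing Ψ with
  | nil => rfl
  | cons a s ih =>
    show linkL (Ψ.link {a}) (s ++ t) = _
    rw [ih]
    rfl

lemma linkL_verts (s : List V) (Ψ : Constellation V) :
    (linkL Ψ s).verts = Ψ.verts \ s.toFinset := by
  induction s generalizing Ψ with
  | nil => simp [linkL]
  | cons a s ih =>
    simp only [linkL, ih, Constellation.link, List.toFinset_cons]
    ext v; simp; tauto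

lemma linkL_W (s : List V) (Ψ : Constellation V) (t : Finset V) :
    (linkL Ψ s).W t = Ψ.W (t ∪ s.toFinset) \ s.toFinset := by
  induction s generalizing Ψ t with
  | nil => simp [linkL]
  | cons a s ih =>
    simp only [linkL, ih, Constellation.link, List.toFinset_cons]
    have h1 : (t ∪ s.toFinset) ∪ {a} = t ∪ insert a s.toFinset := by ext v; simp
    rw [h1]
    ext v; simp; tauto

lemma linkL_edge (s : List V) (Ψ : Constellation V) (f : Finset V) (hs : s.Nodup)
    (hf : f ∈ Ψ.edges) (hsub : s.toFinset ⊆ f) : f \ s.toFinset ∈ (linkL Ψ s).edges := by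
  induction s generalizing Ψ f with
  | nil => simpa [linkL] using hf
  | cons a s ih =>
    have ha : a ∈ f := hsub (by simp)
    have h1 : f \ {a} ∈ (Ψ.link {a}).edges := by
      simp only [Constellation.link, Finset.mem_image, Finset.mem_filter]
      exact ⟨f, ⟨hf, by simpa using ha⟩, rfl⟩
    have hans : a ∉ s := by simpa using (List.nodup_cons.1 hs).1
    have hsub2 : s.toFinset ⊆ f \ {a} := by
      intro v hv
      simp only [Finset.mem_sdiff, Finset.mem_singleton]
      refine ⟨hsub (by simp [List.mem_toFinset.1 hv]), ?_⟩
      rintro rfl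
      exact hans (List.mem_toFinset.1 hv)
    have := ih (Ψ.link {a}) (f \ {a}) (List.nodup_cons.1 hs).2 h1 hsub2
    simp only [linkL]
    convert this using 1
    ext v; simp; tauto

/-- segment of a list -/
def seg (l : List V) (a b : ℕ) : List V := (l.drop a).take b

lemma seg_length {l : List V} {a b : ℕ} (h : a + b ≤ l.length) :
    (seg l a b).length = b := by simp [seg]; omega

lemma seg_getElem {l : List V} {a b i : ℕ} (hy : a + b ≤ l.length) (h : i < b) :
    (seg l a b)[i]'(by rw [seg_length hy]; exact h) = l[a + i]'(by omega) := by
  simp [seg]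

lemma seg_mem {l : List V} {a b : ℕ} (hy : a + b ≤ l.length) {v : V} :
    v ∈ seg l a b ↔ ∃ i, ∃ h : i < b, l[a+i]'(by omega) = v := by
  rw [List.mem_iff_getElem]
  constructor
  · rintro ⟨i, hi, rfl⟩
    have hi' : i < b := by rwa [seg_length hy] at hi
    exact ⟨i, hi', (seg_getElem hy hi').symm⟩
  · rintro ⟨i, hi, rfl⟩
    exact ⟨i, by rw [seg_length hy]; exact hi, seg_getElem hy hi⟩

lemma my_tail_take (l : List V) (n : ℕ) : (l.take n).tail = l.tail.take (n-1) := by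
  cases l <;> cases n <;> simp

lemma seg_tail (l : List V) (a b : ℕ) : (seg l a b).tail = seg l (a+1) (b-1) := by
  simp only [seg, my_tail_take, List.tail_drop]

lemma seg_sub_seg {l : List V} {a b a' b' : ℕ} (h1 : a' ≤ a) (h2 : a + b ≤ a' + b')
    (hb : a' + b' ≤ l.length) : seg l a b = seg (seg l a' b') (a - a') b := by
  have hab : a + b ≤ l.length := by omega
  have hlen' : (seg l a' b').length = b' := seg_length hb
  apply List.ext_getElem
  · rw [seg_length hab, seg_length (by rw [hlen']; omega)]
  · intro i hi1 hi2
    rw [seg_length hab] at hi1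
    rw [seg_getElem hab hi1, seg_getElem (l := seg l a' b') (by rw [hlen']; omega) hi1,
      seg_getElem hb (by omega)]
    congr 1
    omega

lemma seg_nodup_of_nodup {l : List V} {a b a' b' : ℕ} (h1 : a' ≤ a) (h2 : a + b ≤ a' + b')
    (hb : a' + b' ≤ l.length) (hnd : (seg l a' b').Nodup) : (seg l a b).Nodup := by
  rw [seg_sub_seg h1 h2 hb]
  exact ((List.take_sublist b ((seg l a' b').drop (a-a'))).trans
    (List.drop_sublist (a-a') (seg l a' b'))).nodup hnd

end AuxStmt8
section AuxStmt8b
set_option linter.unusedSectionVars false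
variable {V : Type*} [DecidableEq V]

lemma seg_ne {l : List V} {a b p q : ℕ} (hb : a + b ≤ l.length)
    (hnd : (seg l a b).Nodup) (hp : a ≤ p) (hq : a ≤ q) (hpb : p < a + b) (hqb : q < a + b)
    (hne : p ≠ q) : l[p]'(by omega) ≠ l[q]'(by omega) := by
  intro h
  have h1 : (seg l a b)[p - a]'(by rw [seg_length hb]; omega) =
      (seg l a b)[q - a]'(by rw [seg_length hb]; omega) := by
    rw [seg_getElem hb (by omega), seg_getElem hb (by omega)]
    convert h using 2 <;> omega
  rw [List.Nodup.getElem_inj_iff hnd] at h1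
  omega

/-- the extension set appearing in the definition of leftconnectability -/
def Gset (Ψ : Constellation V) (ζ : ℝ) (xs : List V) : Set V :=
  {z : V | z ∈ Ψ.verts ∧ insert z xs.toFinset ∈ Ψ.edges ∧
      LeftConn xs.length (Ψ.link {z}) ζ xs.tail}

lemma leftConn_iff_gset {n : ℕ} (Ψ : Constellation V) (ζ : ℝ) {xs : List V}
    (h : xs.length = n + 2) :
    LeftConn (n+3) Ψ ζ xs ↔
      ζ * (Ψ.verts.card : ℝ) ≤ ((Gset Ψ ζ xs).ncard : ℝ) := by
  show (xs.length = n + 2 ∧ _) ↔ _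
  rw [Gset, h]
  exact and_iff_right rfl

lemma leftConn_two_iff (Ψ : Constellation V) (ζ : ℝ) (xs : List V) :
    LeftConn 2 Ψ ζ xs ↔ (xs.length = 1 ∧ ∀ v ∈ xs, v ∈ Ψ.W ∅) := Iff.rfl

/-- the counting lemma -/
lemma count_lemma {V : Type*} [Fintype V] [DecidableEq V] {m : ℕ} (c : Fin m)
    (A : Finset V) (T : Finset (Fin m → V)) (B : (Fin m → V) → Finset V) (M : ℝ) (hM : 0 ≤ M)
    (hdep : ∀ x y : Fin m → V, (∀ i, i ≠ c → x i = y i) → B x = B y)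
    (hT : ∀ x ∈ T, (∀ i, x i ∈ A) ∧ x c ∈ B x ∧ ((B x).card : ℝ) ≤ M) :
    (T.card : ℝ) ≤ M * (A.card : ℝ) ^ (m - 1) := by
  classical
  set g : (Fin m → V) → ({i : Fin m // i ≠ c} → V) := fun x i => x i.1 with hg
  have hcard : T.card = ∑ y ∈ T.image g, (T.filter fun x => g x = y).card :=
    Finset.card_eq_sum_card_fiberwise (fun x hx => Finset.mem_image_of_mem g hx)
  have hfib : ∀ y ∈ T.image g, ((T.filter fun x => g x = y).card : ℝ) ≤ M := by
    intro y hy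
    obtain ⟨x₀, hx₀T, hx₀⟩ := Finset.mem_image.1 hy
    have hle : (T.filter fun x => g x = y).card ≤ (B x₀).card := by
      apply Finset.card_le_card_of_injOn (fun x => x c)
      · intro x hx
        obtain ⟨hxT, hgx⟩ := Finset.mem_filter.1 hx
        have hB : B x = B x₀ :=
          hdep x x₀ (fun i hi => congrFun (hgx.trans hx₀.symm) ⟨i, hi⟩)
        exact hB ▸ (hT x hxT).2.1
      · intro x hx x' hx' h
        obtain ⟨_, hgx⟩ := Finset.mem_filter.1 (Finset.mem_coe.1 hx)
        obtain ⟨_, hgx'⟩ := Finset.mem_filter.1 (Finset.mem_coe.1 hx')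
        funext i
        by_cases hi : i = c
        · subst hi; exact h
        · exact congrFun (hgx.trans hgx'.symm) ⟨i, hi⟩
    calc ((T.filter fun x => g x = y).card : ℝ) ≤ ((B x₀).card : ℝ) := by exact_mod_cast hle
      _ ≤ M := (hT x₀ hx₀T).2.2
  have himg : ((T.image g).card : ℝ) ≤ (A.card : ℝ) ^ (m - 1) := by
    have hsub : T.image g ⊆ Fintype.piFinset (fun _ => A) := by
      intro y hy
      obtain ⟨x, hxT, rfl⟩ := Finset.mem_image.1 hy
      rw [Fintype.mem_piFinset]
      exact fun i => (hT x hxT).1 i.1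
    have h1 : (T.image g).card ≤ A.card ^ (m - 1) := by
      calc (T.image g).card ≤ (Fintype.piFinset (fun _ : {i : Fin m // i ≠ c} => A)).card :=
            Finset.card_le_card hsub
        _ = A.card ^ (Fintype.card {i : Fin m // i ≠ c}) := by
            simp [Fintype.card_piFinset]
        _ = A.card ^ (m - 1) := by
            congr 1
            simp [Fintype.card_subtype_compl]
    exact_mod_cast h1
  calc (T.card : ℝ) = ∑ y ∈ T.image g, ((T.filter fun x => g x = y).card : ℝ) := by
        rw [hcard]; push_cast; rfl
    _ ≤ ∑ _y ∈ T.image g, M := Finset.sum_le_sum hfib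
    _ = (T.image g).card * M := by rw [Finset.sum_const, nsmul_eq_mul]
    _ ≤ (A.card : ℝ) ^ (m - 1) * M := by
        apply mul_le_mul_of_nonneg_right himg hM
    _ = M * (A.card : ℝ) ^ (m - 1) := mul_comm _ _

end AuxStmt8b
section AuxStmt8c
set_option linter.unusedSectionVars false
set_option maxHeartbeats 1000000
variable {V : Type*} [DecidableEq V]

lemma seg_succ {l : List V} {a b : ℕ} (h : a + b + 1 ≤ l.length) :
    seg l a (b+1) = seg l a b ++ [l[a+b]'(by omega)] := by
  simp only [seg, List.take_succ]
  congr 1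
  rw [List.getElem?_eq_getElem (by simp only [List.length_drop]; omega)]
  simp

lemma image_eq_seg {m : ℕ} (x : Fin m → V) (a b : ℕ) (h : a + b ≤ m) (f : Fin b → Fin m)
    (hf : ∀ i, (f i).1 = a + i.1) :
    Finset.image (fun i => x (f i)) Finset.univ = (seg (List.ofFn x) a b).toFinset := by
  have hl : (List.ofFn x).length = m := List.length_ofFn
  ext v
  rw [List.mem_toFinset, seg_mem (by omega)]
  simp only [Finset.mem_image, Finset.mem_univ, true_and]
  constructor
  · rintro ⟨i, rfl⟩
    refine ⟨i.1, i.2, ?_⟩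
    rw [List.getElem_ofFn]
    congr 1
    exact Fin.ext (hf i).symm
  · rintro ⟨i, hib, rfl⟩
    refine ⟨⟨i, hib⟩, ?_⟩
    rw [List.getElem_ofFn]
    congr 1
    exact Fin.ext (hf ⟨i, hib⟩)

lemma ofFn_eq_seg {m : ℕ} (x : Fin m → V) (b : ℕ) (h : b ≤ m) (f : Fin b → Fin m)
    (hf : ∀ i, (f i).1 = i.1) :
    List.ofFn (fun i => x (f i)) = seg (List.ofFn x) 0 b := by
  have hl : (List.ofFn x).length = m := List.length_ofFn
  apply List.ext_getElem
  · rw [List.length_ofFn, seg_length (by omega)]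
  · intro i h1 h2
    rw [List.length_ofFn] at h1
    rw [List.getElem_ofFn, seg_getElem (by omega) h1, List.getElem_ofFn]
    congr 1
    exact Fin.ext (by simp [hf ⟨i, h1⟩])

/-- the edge of the walk starting at position `j` -/
lemma walk_edge {k m : ℕ} {E : Finset (Finset V)} {x : Fin m → V}
    (hw : IsWalk E k m x) (hU : ∀ e ∈ E, e.card = k) (j : ℕ) (hj : j + k ≤ m) :
    (seg (List.ofFn x) j k).toFinset ∈ E ∧ (seg (List.ofFn x) j k).Nodup := by
  have h1 := hw j hj
  rw [image_eq_seg x j k hj _ (fun i => rfl)] at h1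
  refine ⟨h1, nodup_of_toFinset_card ?_⟩
  rw [hU _ h1, seg_length (by rw [List.length_ofFn]; omega)]

end AuxStmt8c
section AuxStmt8d
set_option linter.unusedSectionVars false
set_option maxHeartbeats 1000000
variable {V : Type*} [DecidableEq V]

lemma getElem_idx_congr {l : List V} {i j : ℕ} (h : i = j) {hi : i < l.length} :
    l[i]'hi = l[j]'(h ▸ hi) := by subst h; rfl

lemma getElem_ofFn' {m : ℕ} (x : Fin m → V) (i : ℕ) (h : i < (List.ofFn x).length)
    (h2 : i < m) : (List.ofFn x)[i]'h = x ⟨i, h2⟩ := by simp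

variable {k : ℕ} {Ψ : Constellation V} {ζ : ℝ} {x : Fin (2*k-3) → V}

/-- membership of `x (k-1+j)` in the extension set when level `j+1` is leftconnectable -/
lemma step_mem (hk : 3 ≤ k) (hΨ : IsUniformConst k Ψ)
    (hw : IsWalk Ψ.edges k (2*k-3) x) (hx : ∀ i, x i ∈ Ψ.verts)
    (j : ℕ) (hj : j + 3 ≤ k)
    (hL : LeftConn (k-(j+1)) (linkL Ψ (seg (List.ofFn x) (k-1) (j+1))) ζ
      (seg (List.ofFn x) (j+1) (k-1-(j+1)))) :
    x ⟨k-1+j, by omega⟩ ∈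
      Gset (linkL Ψ (seg (List.ofFn x) (k-1) j)) ζ (seg (List.ofFn x) j (k-1-j)) := by
  have hl : (List.ofFn x).length = 2*k-3 := List.length_ofFn
  obtain ⟨hEmem, hEnd⟩ := walk_edge hw (fun e he => (hΨ e he).2) j (by omega)
  have hznd : x ⟨k-1+j, by omega⟩ = (List.ofFn x)[k-1+j]'(by omega) :=
    (getElem_ofFn' x (k-1+j) (by omega) (by omega)).symm
  have hSnd : (seg (List.ofFn x) (k-1) j).Nodup :=
    seg_nodup_of_nodup (by omega) (by omega) (by omega) hEnd
  have hTlen : (seg (List.ofFn x) j (k-1-j)).length = k-1-j := seg_length (by omega)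
  -- z ∉ S
  have hzS : x ⟨k-1+j, by omega⟩ ∉ (seg (List.ofFn x) (k-1) j).toFinset := by
    rw [List.mem_toFinset, seg_mem (l := List.ofFn x) (a := k-1) (b := j) (by omega)]
    rintro ⟨i, hi, hieq⟩
    rw [hznd] at hieq
    exact seg_ne (a := j) (b := k) (by omega) hEnd (by omega) (by omega) (by omega)
      (by omega) (by omega) hieq
  -- S ⊆ E
  have hsubSE : (seg (List.ofFn x) (k-1) j).toFinset ⊆ (seg (List.ofFn x) j k).toFinset := by
    intro v hv
    rw [List.mem_toFinset, seg_mem (l := List.ofFn x) (a := k-1) (b := j) (by omega)] at hv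
    rw [List.mem_toFinset, seg_mem (l := List.ofFn x) (a := j) (b := k) (by omega)]
    obtain ⟨i, hi, rfl⟩ := hv
    exact ⟨k-1-j+i, by omega, getElem_idx_congr (by omega)⟩
  have hlink := linkL_edge (seg (List.ofFn x) (k-1) j) Ψ _ hSnd hEmem hsubSE
  -- E \ S = insert z T
  have hins : (seg (List.ofFn x) j k).toFinset \ (seg (List.ofFn x) (k-1) j).toFinset =
      insert (x ⟨k-1+j, by omega⟩) (seg (List.ofFn x) j (k-1-j)).toFinset := by
    ext v
    simp only [Finset.mem_sdiff, Finset.mem_insert, List.mem_toFinset,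
      seg_mem (l := List.ofFn x) (a := j) (b := k) (by omega),
      seg_mem (l := List.ofFn x) (a := k-1) (b := j) (by omega),
      seg_mem (l := List.ofFn x) (a := j) (b := k-1-j) (by omega)]
    constructor
    · rintro ⟨⟨i, hi, rfl⟩, hnS⟩
      rcases lt_or_ge (j + i) (k-1) with hc | hc
      · right
        exact ⟨i, by omega, rfl⟩
      · by_cases hik : i = k-1
        · left
          rw [hznd]
          exact getElem_idx_congr (by omega)
        · exfalso
          apply hnS
          exact ⟨j + i - (k-1), by omega, getElem_idx_congr (by omega)⟩
    · rintro (rfl | ⟨i, hi, rfl⟩)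
      · refine ⟨⟨k-1, by omega, ?_⟩, ?_⟩
        · rw [hznd]
          exact getElem_idx_congr (by omega)
        · rintro ⟨i, hi, hieq⟩
          rw [hznd] at hieq
          exact seg_ne (a := j) (b := k) (by omega) hEnd (by omega) (by omega) (by omega)
            (by omega) (by omega) hieq
      · refine ⟨⟨i, by omega, rfl⟩, ?_⟩
        rintro ⟨i', hi', hieq⟩
        exact seg_ne (a := j) (b := k) (by omega) hEnd (by omega) (by omega) (by omega)
          (by omega) (by omega) hieq
  rw [hins] at hlink
  -- assemble
  refine ⟨?_, hlink, ?_⟩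
  · rw [linkL_verts]
    exact Finset.mem_sdiff.2 ⟨hx _, hzS⟩
  · have hlink2 : (linkL Ψ (seg (List.ofFn x) (k-1) j)).link {x ⟨k-1+j, by omega⟩} =
        linkL Ψ (seg (List.ofFn x) (k-1) (j+1)) := by
      rw [seg_succ (by omega), linkL_append, ← hznd]
      rfl
    rw [hTlen, hlink2, seg_tail]
    rw [show k-1-j-1 = k-1-(j+1) from by omega, show k-1-j = k-(j+1) from by omega]
    exact hL

/-- base case: level `k-2` is leftconnectable -/
lemma base_L (hk : 3 ≤ k) (hΨ : IsUniformConst k Ψ)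
    (hw : IsWalk Ψ.edges k (2*k-3) x)
    (hmem : x ⟨k-2, by omega⟩ ∈ Ψ.W ((seg (List.ofFn x) (k-1) (k-2)).toFinset)) :
    LeftConn (k-(k-2)) (linkL Ψ (seg (List.ofFn x) (k-1) (k-2))) ζ
      (seg (List.ofFn x) (k-2) (k-1-(k-2))) := by
  have hl : (List.ofFn x).length = 2*k-3 := List.length_ofFn
  have hkk : k - (k-2) = 2 := by omega
  have h1 : k-1-(k-2) = 1 := by omega
  rw [hkk, h1, leftConn_two_iff]
  obtain ⟨hEmem, hEnd⟩ := walk_edge hw (fun e he => (hΨ e he).2) (k-3) (by omega)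
  refine ⟨seg_length (by omega), ?_⟩
  intro v hv
  rw [seg_mem (l := List.ofFn x) (a := k-2) (b := 1) (by omega)] at hv
  obtain ⟨i, hi, rfl⟩ := hv
  interval_cases i
  rw [linkL_W, Finset.empty_union]
  have hz : (List.ofFn x)[k-2+0]'(by omega) = x ⟨k-2, by omega⟩ :=
    getElem_ofFn' x (k-2+0) (by omega) (by omega)
  rw [hz]
  refine Finset.mem_sdiff.2 ⟨hmem, ?_⟩
  rw [List.mem_toFinset, seg_mem (l := List.ofFn x) (a := k-1) (b := k-2) (by omega)]
  rintro ⟨i', hi', hieq⟩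
  rw [← hz] at hieq
  exact seg_ne (a := k-3) (b := k) (p := k-1+i') (q := k-2+0) (by omega) hEnd (by omega)
    (by omega) (by omega) (by omega) (by omega) hieq

end AuxStmt8d
section AuxStmt8e
set_option linter.unusedSectionVars false
set_option maxHeartbeats 1000000
variable {V : Type*} [DecidableEq V]

lemma seg_congr {m : ℕ} (x y : Fin m → V) (a b : ℕ) (h : a + b ≤ m)
    (hagree : ∀ i : Fin m, a ≤ i.1 → i.1 < a + b → x i = y i) :
    seg (List.ofFn x) a b = seg (List.ofFn y) a b := by
  have hlx : (List.ofFn x).length = m := List.length_ofFn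
  have hly : (List.ofFn y).length = m := List.length_ofFn
  apply List.ext_getElem
  · rw [seg_length (by omega), seg_length (by omega)]
  · intro i h1 h2
    rw [seg_length (l := List.ofFn x) (by omega)] at h1
    rw [seg_getElem (by omega) h1, seg_getElem (by omega) h1,
      getElem_ofFn' _ _ _ (by omega), getElem_ofFn' _ _ _ (by omega)]
    exact hagree ⟨a+i, by omega⟩ (by simp only [Fin.val_mk]; omega) (by simp only [Fin.val_mk]; omega)

/-- the extension set at level `j` of a walk -/
def GsetW (Ψ : Constellation V) (ζ : ℝ) (k j : ℕ) (y : Fin (2*k-3) → V) : Set V :=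
  Gset (linkL Ψ (seg (List.ofFn y) (k-1) j)) ζ (seg (List.ofFn y) j (k-1-j))

lemma gsetW_congr {k : ℕ} (Ψ : Constellation V) (ζ : ℝ) (j : ℕ) (hj : j + 3 ≤ k)
    (x y : Fin (2*k-3) → V) (hxy : ∀ i : Fin (2*k-3), i.1 ≠ k-1+j → x i = y i) :
    GsetW Ψ ζ k j x = GsetW Ψ ζ k j y := by
  unfold GsetW
  rw [seg_congr x y (k-1) j (by omega) (fun i h1 h2 => hxy i (by omega)),
    seg_congr x y j (k-1-j) (by omega) (fun i h1 h2 => hxy i (by omega))]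

end AuxStmt8e

set_option maxHeartbeats 1600000
/-- Lemma 2.15: in a `k`-uniform constellation `Ψ` there are at most `(k-2) ζ |V(Ψ)|^{2k-3}`
walks `x₁…x_{2k-3}` in `H(Ψ)` with `x_{k-1} ∈ V(R_{x_k…x_{2k-3}})` such that `(x₁,…,x_{k-1})`
fails to be `ζ`-leftconnectable in `Ψ`. -/
theorem stmt8 {V : Type*} [Fintype V] [DecidableEq V] (k : ℕ) (hk : 2 ≤ k)
    (ζ : ℝ) (hζ : 0 < ζ)
    (Ψ : Constellation V) (hΨ : IsUniformConst k Ψ) :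
    (({x : Fin (2 * k - 3) → V | (∀ i, x i ∈ Ψ.verts) ∧
        IsWalk Ψ.edges k (2 * k - 3) x ∧
        x ⟨k - 2, by omega⟩ ∈
          Ψ.W (Finset.image (fun j : Fin (k - 2) => x ⟨(k - 1) + j.1, by have := j.2; omega⟩)
            Finset.univ) ∧
        ¬ LeftConn k Ψ ζ
          (List.ofFn (fun j : Fin (k - 1) => x ⟨j.1, by have := j.2; omega⟩))} :
      Set (Fin (2 * k - 3) → V)).ncard : ℝ) ≤
      ((k : ℝ) - 2) * ζ * (Ψ.verts.card : ℝ) ^ (2 * k - 3) := by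
  classical
  rcases eq_or_lt_of_le hk with hk2 | hk3
  · -- case k = 2
    subst hk2
    have hempty : {x : Fin (2 * 2 - 3) → V | (∀ i, x i ∈ Ψ.verts) ∧
        IsWalk Ψ.edges 2 (2 * 2 - 3) x ∧
        x ⟨2 - 2, by omega⟩ ∈
          Ψ.W (Finset.image (fun j : Fin (2 - 2) => x ⟨(2 - 1) + j.1, by have := j.2; omega⟩)
            Finset.univ) ∧
        ¬ LeftConn 2 Ψ ζ
          (List.ofFn (fun j : Fin (2 - 1) => x ⟨j.1, by have := j.2; omega⟩))} = ∅ := by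
      ext x
      simp only [Set.mem_setOf_eq, Set.mem_empty_iff_false, iff_false]
      rintro ⟨h1, h2, h3, h4⟩
      apply h4
      refine ⟨by simp, ?_⟩
      intro v hv
      rw [List.mem_ofFn] at hv
      obtain ⟨i, rfl⟩ := hv
      have himg : (Finset.image (fun j : Fin (2 - 2) =>
          x ⟨(2 - 1) + j.1, by have := j.2; omega⟩) Finset.univ) = (∅ : Finset V) := by
        ext v
        simp only [Finset.mem_image, Finset.mem_univ, true_and, Finset.notMem_empty,
          iff_false]
        rintro ⟨i', -⟩
        exact absurd i'.2 (by omega)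
      rw [himg] at h3
      have he : (⟨i.1, by have := i.2; omega⟩ : Fin (2 * 2 - 3)) = ⟨2 - 2, by omega⟩ :=
        Fin.ext (by have := i.2; omega)
      show x (⟨i.1, by have := i.2; omega⟩ : Fin (2 * 2 - 3)) ∈ Ψ.W ∅
      rw [he]
      exact h3
    rw [hempty, Set.ncard_empty]
    norm_num
  · have hk3 : 3 ≤ k := hk3
    set N : ℕ := Ψ.verts.card with hN
    set Bad : ℕ → Finset (Fin (2*k-3) → V) := fun j =>
      Finset.univ.filter (fun y => (∀ i, y i ∈ Ψ.verts) ∧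
        (((GsetW Ψ ζ k j y).ncard : ℝ) < ζ * (N : ℝ)) ∧
        ∀ h : k-1+j < 2*k-3, y ⟨k-1+j, h⟩ ∈ GsetW Ψ ζ k j y) with hBad
    -- every bad walk fails at some level
    have key : ∀ x : Fin (2*k-3) → V, (∀ i, x i ∈ Ψ.verts) → IsWalk Ψ.edges k (2*k-3) x →
        x ⟨k - 2, by omega⟩ ∈
          Ψ.W (Finset.image (fun j : Fin (k - 2) => x ⟨(k - 1) + j.1, by have := j.2; omega⟩)
            Finset.univ) →
        ¬ LeftConn k Ψ ζ (List.ofFn (fun j : Fin (k - 1) => x ⟨j.1, by have := j.2; omega⟩)) →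
        ∃ j < k-2, x ∈ Bad j := by
      intro x hx1 hx2 hx3 hx4
      set P : ℕ → Prop := fun j => LeftConn (k-j) (linkL Ψ (seg (List.ofFn x) (k-1) j)) ζ
        (seg (List.ofFn x) j (k-1-j)) with hP
      have h0 : ¬ P 0 := by
        intro hh
        apply hx4
        rw [ofFn_eq_seg x (k-1) (by omega) _ (fun i => rfl)]
        exact hh
      have hbase : P (k-2) := by
        rw [image_eq_seg x (k-1) (k-2) (by omega) _ (fun i => rfl)] at hx3
        exact base_L hk3 hΨ hx2 hx3
      obtain ⟨j, hjlt, hnPj, hPj1⟩ := chain_exists P (k-2) h0 hbase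
      refine ⟨j, hjlt, ?_⟩
      rw [hBad]
      simp only [Finset.mem_filter, Finset.mem_univ, true_and]
      refine ⟨hx1, ?_, ?_⟩
      · have hTlen : (seg (List.ofFn x) j (k-1-j)).length = (k-j-3)+2 := by
          rw [seg_length (by rw [List.length_ofFn]; omega)]; omega
        rw [hP] at hnPj
        simp only at hnPj
        rw [show k - j = (k-j-3)+3 from by omega, leftConn_iff_gset _ _ hTlen] at hnPj
        push_neg at hnPj
        have hcard : ((linkL Ψ (seg (List.ofFn x) (k-1) j)).verts.card : ℝ) ≤ (N : ℝ) := by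
          rw [linkL_verts]
          exact_mod_cast Finset.card_le_card Finset.sdiff_subset
        calc ((GsetW Ψ ζ k j x).ncard : ℝ)
            < ζ * ((linkL Ψ (seg (List.ofFn x) (k-1) j)).verts.card : ℝ) := hnPj
          _ ≤ ζ * (N : ℝ) := mul_le_mul_of_nonneg_left hcard hζ.le
      · intro h
        exact step_mem hk3 hΨ hx2 hx1 j (by omega) hPj1
    -- counting
    have hcount : ∀ j ∈ Finset.range (k-2),
        ((Bad j).card : ℝ) ≤ ζ * (N : ℝ) * (N : ℝ) ^ (2*k-3-1) := by
      intro j hj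
      rw [Finset.mem_range] at hj
      have hc : k-1+j < 2*k-3 := by omega
      refine count_lemma (⟨k-1+j, hc⟩ : Fin (2*k-3)) Ψ.verts (Bad j)
        (fun y => (GsetW Ψ ζ k j y).toFinite.toFinset) (ζ * (N : ℝ)) (by positivity) ?_ ?_
      · intro a b hab
        have hG : GsetW Ψ ζ k j a = GsetW Ψ ζ k j b :=
          gsetW_congr Ψ ζ j (by omega) a b
            (fun i hi => hab i (fun hcon => hi (by rw [hcon])))
        ext v
        simp only [Set.Finite.mem_toFinset, hG]
      · intro y hy
        rw [hBad] at hy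
        simp only [Finset.mem_filter, Finset.mem_univ, true_and] at hy
        obtain ⟨hy1, hy2, hy3⟩ := hy
        refine ⟨hy1, ?_, ?_⟩
        · rw [Set.Finite.mem_toFinset]
          exact hy3 hc
        · have hh : (GsetW Ψ ζ k j y).ncard = (GsetW Ψ ζ k j y).toFinite.toFinset.card :=
            Set.ncard_eq_toFinset_card _ _
          calc (((GsetW Ψ ζ k j y).toFinite.toFinset.card : ℕ) : ℝ)
              = ((GsetW Ψ ζ k j y).ncard : ℝ) := by rw [hh]
            _ ≤ ζ * (N : ℝ) := hy2.le
    -- assemble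
    apply le_trans (b := ((((Finset.range (k-2)).biUnion Bad).card : ℕ) : ℝ))
    · rw [← Set.ncard_coe_finset ((Finset.range (k-2)).biUnion Bad)]
      apply Nat.cast_le.2
      apply Set.ncard_le_ncard ?_ (Finset.finite_toSet _)
      rintro x ⟨h1, h2, h3, h4⟩
      obtain ⟨j, hj, hmem⟩ := key x h1 h2 h3 h4
      simp only [Finset.coe_biUnion, Finset.mem_coe, Finset.mem_range, Set.mem_iUnion]
      exact ⟨j, hj, hmem⟩
    · calc ((((Finset.range (k-2)).biUnion Bad).card : ℕ) : ℝ)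
          ≤ ((∑ j ∈ Finset.range (k-2), (Bad j).card : ℕ) : ℝ) := by
            exact_mod_cast Finset.card_biUnion_le
        _ = ∑ j ∈ Finset.range (k-2), ((Bad j).card : ℝ) := by push_cast; rfl
        _ ≤ ∑ _j ∈ Finset.range (k-2), ζ * (N : ℝ) * (N : ℝ) ^ (2*k-3-1) :=
            Finset.sum_le_sum hcount
        _ = ((k-2 : ℕ) : ℝ) * (ζ * (N : ℝ) * (N : ℝ) ^ (2*k-3-1)) := by
            rw [Finset.sum_const, Finset.card_range, nsmul_eq_mul]
        _ = ((k : ℝ) - 2) * ζ * (N : ℝ) ^ (2*k-3) := by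
            rw [Nat.cast_sub hk]
            conv_rhs => rw [show 2*k-3 = (2*k-3-1)+1 from by omega, pow_succ]
            push_cast
            ring
end

section
/- Let k ≥ 2 and α, μ > 0, and let Ψ be a k-uniform (α, μ)-constellation on n vertices. Then for every (k−2)-element set x ⊆ V(Ψ), the number of vertices z ∈ V(Ψ) \ V(R^Ψ_x) with degree greater than (n−2)/3 in the link graph H(Ψ_x) is at most (2μ/α)·n. -/
open Finset

/-- Fact 2.19: in a `k`-uniform `(α, μ)`-constellation on `n` vertices, for every `(k-2)`-set
`x` there are at most `(2μ/α) n` vertices `z ∉ V(R_x)` whose degree in the link graph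
`H(Ψ_x)` exceeds `(n-2)/3`. -/
theorem stmt10 {V : Type*} [Fintype V] [DecidableEq V] (k : ℕ) (hk : 2 ≤ k)
    (α μ : ℝ) (hα : 0 < α) (hμ : 0 < μ)
    (Ψ : Constellation V) (h : IsAMConst k Ψ α μ)
    (x : Finset V) (hx : x ⊆ Ψ.verts) (hxc : x.card = k - 2) :
    (({z : V | z ∈ Ψ.verts ∧ z ∉ Ψ.W x ∧
        ((Ψ.verts.card : ℝ) - 2) / 3 <
          (((Ψ.link x).edges.filter fun p => z ∈ p).card : ℝ)} : Set V).ncard : ℝ) ≤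
      2 * μ / α * (Ψ.verts.card : ℝ) := by
  classical
  obtain ⟨huni, hprop⟩ := h
  obtain ⟨-, hWsub, hWcard, hcross⟩ := hprop x hx hxc
  set n := Ψ.verts.card with hn
  set Wx := Ψ.W x with hWxdef
  set E := (Ψ.link x).edges with hE
  have hedge : ∀ p ∈ E, p.card = 2 ∧ p ⊆ Ψ.verts := by
    intro p hp
    simp only [hE, Constellation.link, Finset.mem_image, Finset.mem_filter] at hp
    obtain ⟨e, ⟨he, hxe⟩, rfl⟩ := hp
    obtain ⟨hesub, hecard⟩ := huni e he
    refine ⟨?_, Finset.sdiff_subset.trans hesub⟩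
    rw [Finset.card_sdiff_of_subset hxe, hecard, hxc]; omega
  set B := Ψ.verts.filter (fun z => z ∉ Wx ∧
      ((n : ℝ) - 2) / 3 < ((E.filter fun p => z ∈ p).card : ℝ)) with hB
  have hset : ({z : V | z ∈ Ψ.verts ∧ z ∉ Ψ.W x ∧
        ((Ψ.verts.card : ℝ) - 2) / 3 <
          (((Ψ.link x).edges.filter fun p => z ∈ p).card : ℝ)} : Set V) = ↑B := by
    ext z
    simp [hB, ← hWxdef, ← hE, ← hn]
  rw [hset, Set.ncard_coe_finset]
  set crossSet := E.filter (fun p => (p ∩ Wx).Nonempty ∧ (p \ Wx).Nonempty) with hCS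
  have hccount : crossSet.card = crossCount Ψ x := by
    rw [hCS, hE, hWxdef, crossCount]
  -- key per-vertex bound
  have key : ∀ z ∈ B, α * n / 2 ≤ ((crossSet.filter fun p => z ∈ p).card : ℝ) := by
    intro z hz
    rw [hB, Finset.mem_filter] at hz
    obtain ⟨hzv, hzW, hzd⟩ := hz
    set cz := crossSet.filter (fun p => z ∈ p) with hcz
    set nz := E.filter (fun p => z ∈ p ∧ ¬((p ∩ Wx).Nonempty ∧ (p \ Wx).Nonempty)) with hnzdef
    have hsub : E.filter (fun p => z ∈ p) ⊆ cz ∪ nz := by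
      intro p hp
      rw [Finset.mem_filter] at hp
      by_cases hc : (p ∩ Wx).Nonempty ∧ (p \ Wx).Nonempty
      · exact Finset.mem_union_left _ (by simp only [hcz, hCS, Finset.mem_filter]; tauto)
      · exact Finset.mem_union_right _ (by simp only [hnzdef, Finset.mem_filter]; tauto)
    have hnzsub : nz ⊆ ((Ψ.verts \ Wx).erase z).image (fun y => insert z {y}) := by
      intro p hp
      rw [hnzdef, Finset.mem_filter] at hp
      obtain ⟨hpE, hzp, hnc⟩ := hp
      obtain ⟨hp2, hpv⟩ := hedge p hpE
      have hpW : p ∩ Wx = ∅ := by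
        rw [← Finset.not_nonempty_iff_eq_empty]
        intro hne
        exact hnc ⟨hne, ⟨z, Finset.mem_sdiff.mpr ⟨hzp, hzW⟩⟩⟩
      have h1 : (p.erase z).card = 1 := by
        rw [Finset.card_erase_of_mem hzp, hp2]
      obtain ⟨y, hy⟩ := Finset.card_eq_one.mp h1
      have hyp : y ∈ p.erase z := hy ▸ Finset.mem_singleton_self y
      have hyne : y ≠ z := Finset.ne_of_mem_erase hyp
      have hymem : y ∈ p := Finset.mem_of_mem_erase hyp
      have hyW : y ∉ Wx := fun hyw =>
        (Finset.notMem_empty y) (hpW ▸ Finset.mem_inter.mpr ⟨hymem, hyw⟩)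
      refine Finset.mem_image.mpr ⟨y, ?_, ?_⟩
      · exact Finset.mem_erase.mpr ⟨hyne, Finset.mem_sdiff.mpr ⟨hpv hymem, hyW⟩⟩
      · rw [← hy, Finset.insert_erase hzp]
    have hznW : z ∈ Ψ.verts \ Wx := Finset.mem_sdiff.mpr ⟨hzv, hzW⟩
    have hWle : Wx.card ≤ n := Finset.card_le_card hWsub
    have hsd : (Ψ.verts \ Wx).card = n - Wx.card := Finset.card_sdiff_of_subset hWsub
    have hsdpos : 1 ≤ (Ψ.verts \ Wx).card := Finset.card_pos.mpr ⟨z, hznW⟩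
    have hnzcard : (nz.card : ℝ) ≤ (n : ℝ) - Wx.card - 1 := by
      have h1 := Finset.card_le_card hnzsub
      have h2 := Finset.card_image_le (s := (Ψ.verts \ Wx).erase z)
        (f := fun y : V => insert z ({y} : Finset V))
      have h3 : ((Ψ.verts \ Wx).erase z).card = (Ψ.verts \ Wx).card - 1 :=
        Finset.card_erase_of_mem hznW
      have : nz.card ≤ n - Wx.card - 1 := by omega
      have hcast : ((n - Wx.card - 1 : ℕ) : ℝ) = (n : ℝ) - Wx.card - 1 := by
        have : 1 ≤ n - Wx.card := by omega
        push_cast [Nat.cast_sub hWle, Nat.cast_sub this]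
        ring
      calc (nz.card : ℝ) ≤ ((n - Wx.card - 1 : ℕ) : ℝ) := by exact_mod_cast this
        _ = (n : ℝ) - Wx.card - 1 := hcast
    have hdz : ((E.filter fun p => z ∈ p).card : ℝ) ≤ (cz.card : ℝ) + nz.card := by
      have := (Finset.card_le_card hsub).trans (Finset.card_union_le cz nz)
      exact_mod_cast this
    linarith
  -- double counting
  have hdouble : ∑ z ∈ B, (crossSet.filter fun p => z ∈ p).card ≤ crossSet.card := by
    have e1 : ∑ z ∈ B, (crossSet.filter fun p => z ∈ p).card
        = ∑ p ∈ crossSet, (B.filter fun z => z ∈ p).card := by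
      simp_rw [Finset.card_filter]
      exact Finset.sum_comm
    rw [e1]
    calc ∑ p ∈ crossSet, (B.filter fun z => z ∈ p).card
        ≤ ∑ _p ∈ crossSet, 1 := by
          apply Finset.sum_le_sum
          intro p hp
          rw [hCS, Finset.mem_filter] at hp
          obtain ⟨hpE, hpi, hps⟩ := hp
          obtain ⟨hp2, -⟩ := hedge p hpE
          have hsub2 : B.filter (fun z => z ∈ p) ⊆ p \ Wx := by
            intro z hz
            rw [Finset.mem_filter] at hz
            obtain ⟨hzB, hzp⟩ := hz
            rw [hB, Finset.mem_filter] at hzB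
            exact Finset.mem_sdiff.mpr ⟨hzp, hzB.2.1⟩
          have hi1 : 1 ≤ (p ∩ Wx).card := Finset.card_pos.mpr hpi
          have : (p \ Wx).card ≤ 1 := by
            have : (p \ Wx).card = p.card - (p ∩ Wx).card := by
              rw [← Finset.sdiff_inter_self_left p Wx,
                Finset.card_sdiff_of_subset Finset.inter_subset_left]
            omega
          exact (Finset.card_le_card hsub2).trans this
      _ = crossSet.card := by simp
  -- put everything together
  have hsum : (B.card : ℝ) * (α * n / 2) ≤ μ * (n : ℝ) ^ 2 := by
    have h1 : (B.card : ℝ) * (α * n / 2) ≤ ∑ z ∈ B, ((crossSet.filter fun p => z ∈ p).card : ℝ) := by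
      have := Finset.sum_le_sum key
      simpa [Finset.sum_const, nsmul_eq_mul] using this
    have h2 : (∑ z ∈ B, ((crossSet.filter fun p => z ∈ p).card : ℝ)) ≤ (crossSet.card : ℝ) := by
      exact_mod_cast hdouble
    have h3 : (crossSet.card : ℝ) ≤ μ * (n : ℝ) ^ 2 := by rw [hccount]; exact hcross
    linarith
  rcases Nat.eq_zero_or_pos n with h0 | hpos
  · have hBempty : B = ∅ := by
      have : Ψ.verts = ∅ := Finset.card_eq_zero.mp h0
      rw [hB, this]; simp
    rw [hBempty, h0]
    simp
  · have hnpos : (0 : ℝ) < n := by exact_mod_cast hpos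
    rw [div_mul_eq_mul_div, le_div_iff₀ hα]
    nlinarith [hsum]
end

section
/- For every k-partite k-uniform hypergraph F and every ε > 0 there exist ξ > 0 and n₀ ∈ ℕ such that every k-uniform hypergraph H on n ≥ n₀ vertices with at least εn^k edges contains at least ξn^{|V(F)|} copies of F. -/
open Finset

section stmt13helpers

variable {W : Type} [Fintype W] [DecidableEq W]

def stmt13T (k t : ℕ) (A : Finset (Fin k → W)) : Finset (Fin k → Fin t → W) :=
  univ.filter (fun g => ∀ a : Fin k → Fin t, (fun i => g i (a i)) ∈ A)

lemma stmt13_lemA (t : ℕ) (ht : 1 ≤ t) :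
    ∀ (k : ℕ) (A : Finset (Fin k → W)),
      (A.card : ℝ) ^ (t ^ k) * (Fintype.card W : ℝ) ^ (k * t) ≤
        ((stmt13T k t A).card : ℝ) * (Fintype.card W : ℝ) ^ (k * t ^ k)
  | 0, A => by
    simp only [pow_zero, pow_one, Nat.zero_mul, mul_one]
    have h1 : A.card ≤ (stmt13T 0 t A).card := by
      rcases A.eq_empty_or_nonempty with rfl | ⟨f, hf⟩
      · simp
      · have hA : A.card ≤ 1 := by
          calc A.card ≤ Fintype.card (Fin 0 → W) := card_le_univ A
          _ = 1 := by simp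
        have : (fun (i : Fin 0) (_ : Fin t) => f i) ∈ stmt13T 0 t A := by
          simp only [stmt13T, mem_filter, mem_univ, true_and]
          intro a
          have : (fun i : Fin 0 => f i) = f := by funext i; exact i.elim0
          simpa [this] using hf
        exact hA.trans (card_pos.mpr ⟨_, this⟩)
    exact_mod_cast h1
  | (k+1), A => by
    classical
    set N : ℝ := (Fintype.card W : ℝ) with hN
    have hN0 : 0 ≤ N := by positivity
    let inter : (Fin t → W) → Finset (Fin k → W) :=
      fun h => univ.filter (fun x => ∀ b, Fin.cons (h b) x ∈ A)
    let deg : (Fin k → W) → ℕ := fun x => (univ.filter (fun y : W => Fin.cons y x ∈ A)).card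
    -- F1 : fiber decomposition
    have F1 : (stmt13T (k+1) t A).card = ∑ h : Fin t → W, (stmt13T k t (inter h)).card := by
      rw [card_eq_sum_card_fiberwise (f := fun g => g 0) (t := univ) (fun _ _ => mem_univ _)]
      refine Finset.sum_congr rfl fun h _ => ?_
      refine Finset.card_bij (fun g _ => fun (i : Fin k) => g i.succ) ?_ ?_ ?_
      · intro g hg
        simp only [mem_filter, stmt13T, mem_univ, true_and] at hg ⊢
        obtain ⟨hgA, hg0⟩ := hg
        intro a'
        simp only [inter, mem_filter, mem_univ, true_and]
        intro b
        have := hgA (Fin.cons (α := fun _ => Fin t) b a')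
        have heq : (fun i => g i (Fin.cons (α := fun _ => Fin t) b a' i)) =
            Fin.cons (h b) (fun i => g i.succ (a' i)) := by
          funext i
          refine Fin.cases ?_ (fun j => ?_) i
          · simp [hg0.symm]
          · simp
        rwa [heq] at this
      · intro g₁ hg₁ g₂ hg₂ hgg
        simp only [mem_filter] at hg₁ hg₂
        funext i b
        refine Fin.cases ?_ (fun j => ?_) i
        · rw [hg₁.2, hg₂.2]
        · exact congrFun (congrFun hgg j) b
      · intro x hx
        refine ⟨Fin.cons (h : Fin t → W) x, ?_, ?_⟩
        · simp only [mem_filter, stmt13T, mem_univ, true_and] at hx ⊢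
          constructor
          · intro a
            have hx' := hx (fun j => a j.succ)
            simp only [inter, mem_filter, mem_univ, true_and] at hx'
            have := hx' (a 0)
            have heq : (fun i => Fin.cons (α := fun _ => Fin t → W) h x i (a i)) =
                Fin.cons (h (a 0)) (fun j => x j (a j.succ)) := by
              funext i
              refine Fin.cases ?_ (fun j => ?_) i
              · simp
              · simp
            rwa [heq]
          · simp
        · funext j
          simp
    -- F2
    have F2 : ∑ h : Fin t → W, (inter h).card = ∑ x : Fin k → W, (deg x) ^ t := by
      have e1 : ∀ h : Fin t → W, (inter h).card
          = ∑ x : Fin k → W, ∏ b : Fin t, if Fin.cons (h b) x ∈ A then 1 else 0 := by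
        intro h
        rw [card_filter]
        exact Finset.sum_congr rfl fun x _ => by simp [Fintype.prod_boole]
      calc ∑ h : Fin t → W, (inter h).card
          = ∑ h : Fin t → W, ∑ x : Fin k → W, ∏ b : Fin t,
              if Fin.cons (h b) x ∈ A then 1 else 0 := Finset.sum_congr rfl fun h _ => e1 h
        _ = ∑ x : Fin k → W, ∑ h : Fin t → W, ∏ b : Fin t,
              if Fin.cons (h b) x ∈ A then 1 else 0 := Finset.sum_comm
        _ = ∑ x : Fin k → W, (deg x) ^ t := by
            refine Finset.sum_congr rfl fun x _ => ?_
            rw [show deg x = ∑ y : W, if Fin.cons y x ∈ A then 1 else 0 from card_filter _ _,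
              Fintype.sum_pow]
    -- F3
    have F3 : ∑ x : Fin k → W, deg x = A.card := by
      have h0 : A.card = ∑ f : Fin (k+1) → W, if f ∈ A then 1 else 0 := by
        rw [← card_filter]; congr 1; simp
      rw [h0, ← Equiv.sum_comp (Fin.consEquiv (fun _ => W)) (fun f => if f ∈ A then 1 else 0),
        Fintype.sum_prod_type]
      rw [Finset.sum_comm]
      refine Finset.sum_congr rfl fun x _ => ?_
      rw [show deg x = ∑ y : W, if Fin.cons y x ∈ A then 1 else 0 from card_filter _ _]
      exact Finset.sum_congr rfl fun y _ => by simp [Fin.consEquiv]; congr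
    -- real-number chain
    obtain ⟨t1, ht1⟩ : ∃ t1, t = t1 + 1 := ⟨t - 1, (Nat.succ_pred_eq_of_pos ht).symm⟩
    obtain ⟨e1, he1⟩ : ∃ e1, t ^ k = e1 + 1 :=
      ⟨t ^ k - 1, (Nat.succ_pred_eq_of_pos (Nat.one_le_pow _ _ ht)).symm⟩
    have IHsum : (∑ h : Fin t → W, ((inter h).card : ℝ) ^ (t ^ k)) * N ^ (k * t) ≤
        ((stmt13T (k+1) t A).card : ℝ) * N ^ (k * t ^ k) := by
      rw [F1]
      push_cast
      rw [sum_mul, sum_mul]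
      exact Finset.sum_le_sum fun h _ => stmt13_lemA t ht k (inter h)
    have cardfun : ∀ m : ℕ, ((Fintype.card (Fin m → W) : ℝ)) = N ^ m := by
      intro m; rw [hN]; norm_cast; simp [Fintype.card_fun]
    have J1 : (∑ h : Fin t → W, ((inter h).card : ℝ)) ^ (t ^ k) ≤
        (N ^ t) ^ e1 * ∑ h : Fin t → W, ((inter h).card : ℝ) ^ (t ^ k) := by
      have h3 := pow_sum_le_card_mul_sum_pow (s := (univ : Finset (Fin t → W)))
        (f := fun h => ((inter h).card : ℝ)) (fun i _ => by positivity) e1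
      rw [← he1] at h3
      rwa [card_univ, cardfun] at h3
    have J2 : (A.card : ℝ) ^ t ≤ (N ^ k) ^ t1 * ∑ x : Fin k → W, ((deg x : ℝ)) ^ t := by
      have h3 := pow_sum_le_card_mul_sum_pow (s := (univ : Finset (Fin k → W)))
        (f := fun x => ((deg x : ℝ))) (fun i _ => by positivity) t1
      rw [← ht1] at h3
      rw [card_univ, cardfun] at h3
      have hF3 : (A.card : ℝ) = ∑ x : Fin k → W, ((deg x : ℝ)) := by exact_mod_cast F3.symm
      rw [hF3]
      exact h3
    have F2c : ∑ h : Fin t → W, ((inter h).card : ℝ) = ∑ x : Fin k → W, ((deg x : ℝ)) ^ t := by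
      exact_mod_cast F2
    calc (A.card : ℝ) ^ (t ^ (k+1)) * N ^ ((k+1) * t)
        = ((A.card : ℝ) ^ t) ^ (t ^ k) * N ^ ((k+1) * t) := by
          rw [← pow_mul, ← pow_succ']
      _ ≤ ((N ^ k) ^ t1 * ∑ x : Fin k → W, ((deg x : ℝ)) ^ t) ^ (t ^ k) * N ^ ((k+1) * t) := by
          exact mul_le_mul_of_nonneg_right
            (pow_le_pow_left₀ (by positivity) J2 _) (by positivity)
      _ = ((N ^ k) ^ t1) ^ (t ^ k) *
            (∑ h : Fin t → W, ((inter h).card : ℝ)) ^ (t ^ k) * N ^ ((k+1) * t) := by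
          rw [F2c, mul_pow]
      _ ≤ ((N ^ k) ^ t1) ^ (t ^ k) *
            ((N ^ t) ^ e1 * ∑ h : Fin t → W, ((inter h).card : ℝ) ^ (t ^ k)) *
            N ^ ((k+1) * t) := by
          gcongr
      _ = ((∑ h : Fin t → W, ((inter h).card : ℝ) ^ (t ^ k)) * N ^ (k * t)) *
            N ^ (k * t1 * t ^ k + t * e1 + t) := by
          rw [← pow_mul, ← pow_mul, ← pow_mul, pow_add, pow_add, add_mul, one_mul, pow_add]
          ring
      _ ≤ (((stmt13T (k+1) t A).card : ℝ) * N ^ (k * t ^ k)) *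
            N ^ (k * t1 * t ^ k + t * e1 + t) := by
          gcongr
      _ = ((stmt13T (k+1) t A).card : ℝ) * N ^ ((k+1) * t ^ (k+1)) := by
          rw [mul_assoc, ← pow_add]
          congr 2
          have h2 : t ^ (k+1) = t * t ^ k := by rw [pow_succ']
          rw [h2, he1, ht1]
          ring

lemma stmt13_det {k t : ℕ} (Q : Finset (Fin k → Fin t → W)) (S : Finset (Fin k × Fin t))
    (h : ∀ g₁ ∈ Q, ∀ g₂ ∈ Q, (∀ p ∈ S, g₁ p.1 p.2 = g₂ p.1 p.2) → g₁ = g₂) :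
    Q.card ≤ Fintype.card W ^ S.card := by
  classical
  have h2 : Q.card ≤ (univ : Finset ({x // x ∈ S} → W)).card := by
    refine Finset.card_le_card_of_injOn
      (fun (g : Fin k → Fin t → W) => fun (p : {x // x ∈ S}) => g p.1.1 p.1.2)
      (fun g _ => mem_univ _) ?_
    intro g₁ h₁ g₂ h₂ hgg
    exact h g₁ (by simpa using h₁) g₂ (by simpa using h₂) (fun p hp => congrFun hgg ⟨p, hp⟩)
  calc Q.card ≤ Fintype.card ({x // x ∈ S} → W) := by simpa [card_univ] using h2
    _ = Fintype.card W ^ S.card := by simp [Fintype.card_fun]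

end stmt13helpers

/-- Supersaturation (Erdős–Simonovits): for every `k`-partite `k`-uniform hypergraph `F`
and every `ε > 0` there are `ξ > 0` and `n₀` such that every `k`-uniform hypergraph on
`n ≥ n₀` vertices with at least `ε n^k` edges contains at least `ξ n^{|V(F)|}` copies of `F`. -/
theorem stmt13 (k : ℕ) {VF : Type} [Fintype VF] [DecidableEq VF]
    (EF : Finset (Finset VF)) (hEFu : ∀ e ∈ EF, e.card = k)
    (c : VF → Fin k)
    (hpart : ∀ e ∈ EF, ∀ j : Fin k, (e.filter fun v => c v = j).card = 1)
    (ε : ℝ) (hε : 0 < ε) :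
    ∃ ξ : ℝ, 0 < ξ ∧ ∃ n₀ : ℕ,
      ∀ (W : Type) [Fintype W] [DecidableEq W] (EH : Finset (Finset W)),
        (∀ e ∈ EH, e.card = k) →
        n₀ ≤ Fintype.card W →
        ε * (Fintype.card W : ℝ) ^ k ≤ (EH.card : ℝ) →
        ξ * (Fintype.card W : ℝ) ^ (Fintype.card VF) ≤
          (({φ : VF → W | Function.Injective φ ∧ ∀ e ∈ EF, e.image φ ∈ EH} :
            Set (VF → W)).ncard : ℝ) := by
  classical
  by_cases hk : k = 0
  · -- degenerate case k = 0
    subst hk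
    refine ⟨1, one_pos, 1, ?_⟩
    intro W _ _ EH hH hn hcard
    have hVF : IsEmpty VF := ⟨fun v => (c v).elim0⟩
    have hcV : Fintype.card VF = 0 := Fintype.card_eq_zero
    have hEH : (∅ : Finset W) ∈ EH := by
      have hpos : 0 < EH.card := by
        by_contra h'
        push_neg at h'
        have h0 : EH.card = 0 := by omega
        rw [h0] at hcard
        simp at hcard
        linarith
      obtain ⟨e, he⟩ := Finset.card_pos.mp hpos
      have h0 := hH e he
      rwa [Finset.card_eq_zero.mp h0] at he
    have hset : ({φ : VF → W | Function.Injective φ ∧ ∀ e ∈ EF, e.image φ ∈ EH} :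
        Set (VF → W)) = Set.univ := by
      ext φ
      simp only [Set.mem_setOf_eq, Set.mem_univ, iff_true]
      refine ⟨fun a b _ => Subsingleton.elim a b, fun e he => ?_⟩
      have : e = ∅ := Finset.eq_empty_of_forall_notMem fun x _ => hVF.false x
      subst this
      simpa using hEH
    rw [hset, hcV, Set.ncard_univ]
    have : Nat.card (VF → W) = 1 := by
      rw [Nat.card_eq_fintype_card, Fintype.card_fun, hcV, pow_zero]
    rw [this]
    simp
  · -- main case k ≥ 1
    have hk1 : 1 ≤ k := Nat.one_le_iff_ne_zero.mpr hk
    set v := Fintype.card VF with hv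
    set t := v + 1 with htdef
    have ht : 1 ≤ t := by omega
    set ε' := min ε 1 with hε'def
    have hε' : 0 < ε' := lt_min hε one_pos
    set ξ0 : ℝ := ε' ^ (t ^ k) with hξ0def
    have hξ0 : 0 < ξ0 := pow_pos hε' _
    refine ⟨ξ0 / 2, by positivity, ⌈(2 * (v ^ 2 : ℝ)) / ξ0⌉₊ + 1, ?_⟩
    intro W _ _ EH hH hn hcard
    set n := Fintype.card W with hndef
    set N : ℝ := (n : ℝ) with hNdef
    have hn1 : 1 ≤ n := by omega
    have hN1 : (1 : ℝ) ≤ N := by rw [hNdef]; exact_mod_cast hn1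
    have hN0 : (0 : ℝ) < N := by linarith
    have hNbig : 2 * (v ^ 2 : ℝ) / ξ0 ≤ N := by
      calc 2 * (v ^ 2 : ℝ) / ξ0 ≤ ⌈(2 * (v ^ 2 : ℝ)) / ξ0⌉₊ := Nat.le_ceil _
        _ ≤ N := by
            rw [hNdef]
            have hceil : (⌈2 * ((v:ℝ)) ^ 2 / ξ0⌉₊ : ℕ) ≤ n := by omega
            exact_mod_cast hceil
    have hne : Nonempty W := Fintype.card_pos_iff.mp (by omega)
    -- the ordered edge set
    set E : Finset (Fin k → W) :=
      univ.filter (fun w : Fin k → W => Function.Injective w ∧ Finset.image w univ ∈ EH)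
      with hEdef
    have hEcard : (EH.card : ℝ) ≤ E.card := by
      have : EH.card ≤ E.card := by
        set f : Finset W → (Fin k → W) := fun e i =>
          if h' : e.card = k then
            ((Fintype.equivFinOfCardEq
              (show Fintype.card ↥e = k by rw [Fintype.card_coe]; exact h')).symm i : W)
          else Classical.choice hne with hfdef
        have key : ∀ e ∈ EH, Finset.image (f e) univ = e ∧ Function.Injective (f e) := by
          intro e he
          have hck : e.card = k := hH e he
          have hck' : Fintype.card ↥e = k := by rw [Fintype.card_coe]; exact hck
          have hfe : f e = fun i => ((Fintype.equivFinOfCardEq hck').symm i : W) := by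
            funext i
            simp only [hfdef]
            rw [dif_pos hck]
          constructor
          · ext x
            simp only [Finset.mem_image, mem_univ, true_and, hfe]
            constructor
            · rintro ⟨i, rfl⟩; exact ((Fintype.equivFinOfCardEq hck').symm i).2
            · intro hx
              exact ⟨Fintype.equivFinOfCardEq hck' ⟨x, hx⟩, by simp⟩
          · rw [hfe]
            exact Subtype.coe_injective.comp (Equiv.injective _)
        refine Finset.card_le_card_of_injOn f (fun e he => ?_) ?_
        · simp only [hEdef, Finset.mem_coe, mem_filter, mem_univ, true_and]
          exact ⟨(key e he).2, by rw [(key e he).1]; exact he⟩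
        · intro e₁ h₁ e₂ h₂ hff
          rw [← (key e₁ h₁).1, ← (key e₂ h₂).1, hff]
      exact_mod_cast this
    have hE : ε' * N ^ k ≤ (E.card : ℝ) := by
      calc ε' * N ^ k ≤ ε * N ^ k := by
            apply mul_le_mul_of_nonneg_right (min_le_left _ _) (by positivity)
        _ ≤ (EH.card : ℝ) := hcard
        _ ≤ E.card := hEcard
    -- count of transversal-systems
    set T := stmt13T k t E with hTdef
    have hT : ξ0 * N ^ (k * t) ≤ (T.card : ℝ) := by
      have h1 : (ε' * N ^ k) ^ (t ^ k) * N ^ (k * t) ≤ (E.card : ℝ) ^ (t ^ k) * N ^ (k * t) := by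
        apply mul_le_mul_of_nonneg_right _ (by positivity)
        exact pow_le_pow_left₀ (by positivity) hE _
      have h2 := stmt13_lemA t ht k E
      have h3 : (ξ0 * N ^ (k * t)) * N ^ (k * t ^ k) ≤ ((T.card : ℝ)) * N ^ (k * t ^ k) := by
        calc (ξ0 * N ^ (k * t)) * N ^ (k * t ^ k)
            = (ε' * N ^ k) ^ (t ^ k) * N ^ (k * t) := by
              rw [hξ0def, mul_pow, ← pow_mul]; ring
          _ ≤ (E.card : ℝ) ^ (t ^ k) * N ^ (k * t) := h1
          _ ≤ ((T.card : ℝ)) * N ^ (k * t ^ k) := h2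
      exact le_of_mul_le_mul_right h3 (by positivity)
    -- embedding of VF into Fin k × Fin t
    set ι : VF → Fin t := fun x => Fin.castLE (by omega) (Fintype.equivFin VF x) with hιdef
    have hι : Function.Injective ι := fun a b hab => by
      have := Fin.castLE_injective (by omega) hab
      exact (Fintype.equivFin VF).injective this
    set Φ : (Fin k → Fin t → W) → VF → W := fun g x => g (c x) (ι x) with hΦdef
    have hμ : Function.Injective (fun x : VF => ((c x, ι x) : Fin k × Fin t)) := by
      intro a b hab
      exact hι (congrArg Prod.snd hab)
    set good := T.filter (fun g => Function.Injective (Φ g)) with hgooddef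
    set bad := T.filter (fun g => ¬ Function.Injective (Φ g)) with hbaddef
    have hsplit : good.card + bad.card = T.card :=
      Finset.card_filter_add_card_filter_not _
    -- bad count
    have hbad : (bad.card : ℝ) ≤ (v ^ 2 : ℝ) * N ^ (k * t - 1) := by
      classical
      set pairs := (univ : Finset (VF × VF)).filter (fun p => p.1 ≠ p.2) with hpairsdef
      have hsub : bad ⊆ pairs.biUnion
          (fun p => univ.filter (fun g => Φ g p.1 = Φ g p.2)) := by
        intro g hg
        rw [hbaddef, mem_filter] at hg
        obtain ⟨-, hgni⟩ := hg
        rw [Function.not_injective_iff] at hgni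
        obtain ⟨a, b, hab, hne'⟩ := hgni
        rw [mem_biUnion]
        exact ⟨(a, b), by simp [hpairsdef, hne'], by simp [hab]⟩
      have heach : ∀ p ∈ pairs,
          (univ.filter (fun g : Fin k → Fin t → W => Φ g p.1 = Φ g p.2)).card ≤ n ^ (k * t - 1) := by
        intro p hp
        have hpne : p.1 ≠ p.2 := by simpa [hpairsdef] using hp
        have hcS : (univ.erase ((c p.1, ι p.1) : Fin k × Fin t)).card = k * t - 1 := by
          rw [Finset.card_erase_of_mem (mem_univ _), card_univ]
          simp
        have := stmt13_det
          (univ.filter (fun g : Fin k → Fin t → W => Φ g p.1 = Φ g p.2))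
          (univ.erase ((c p.1, ι p.1) : Fin k × Fin t)) ?_
        · rwa [hcS] at this
        · intro g₁ h₁ g₂ h₂ hagree
          rw [mem_filter] at h₁ h₂
          funext i b
          by_cases hib : (i, b) = ((c p.1, ι p.1) : Fin k × Fin t)
          · have hmem2 : ((c p.2, ι p.2) : Fin k × Fin t) ∈
                univ.erase ((c p.1, ι p.1) : Fin k × Fin t) := by
              refine Finset.mem_erase.mpr ⟨?_, mem_univ _⟩
              intro hcontra
              exact hpne (hμ hcontra.symm)
            have h5 := hagree _ hmem2
            rw [Prod.mk.injEq] at hib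
            obtain ⟨rfl, rfl⟩ : i = c p.1 ∧ b = ι p.1 := hib
            calc g₁ (c p.1) (ι p.1) = Φ g₁ p.1 := rfl
              _ = Φ g₁ p.2 := h₁.2
              _ = g₁ (c p.2) (ι p.2) := rfl
              _ = g₂ (c p.2) (ι p.2) := h5
              _ = Φ g₂ p.2 := rfl
              _ = Φ g₂ p.1 := h₂.2.symm
              _ = g₂ (c p.1) (ι p.1) := rfl
          · exact hagree (i, b) (Finset.mem_erase.mpr ⟨hib, mem_univ _⟩)
      have hb1 : bad.card ≤ v ^ 2 * n ^ (k * t - 1) := by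
        calc bad.card ≤ (pairs.biUnion (fun p => univ.filter (fun g => Φ g p.1 = Φ g p.2))).card :=
              Finset.card_le_card hsub
          _ ≤ ∑ p ∈ pairs, (univ.filter (fun g : Fin k → Fin t → W => Φ g p.1 = Φ g p.2)).card :=
              Finset.card_biUnion_le
          _ ≤ ∑ _p ∈ pairs, n ^ (k * t - 1) := Finset.sum_le_sum heach
          _ = pairs.card * n ^ (k * t - 1) := by rw [Finset.sum_const, smul_eq_mul]
          _ ≤ v ^ 2 * n ^ (k * t - 1) := by
              apply Nat.mul_le_mul_right
              calc pairs.card ≤ (univ : Finset (VF × VF)).card := Finset.card_filter_le _ _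
                _ = v ^ 2 := by rw [card_univ]; simp [hv, sq]
      calc (bad.card : ℝ) ≤ ((v ^ 2 * n ^ (k * t - 1) : ℕ) : ℝ) := by exact_mod_cast hb1
        _ = (v ^ 2 : ℝ) * N ^ (k * t - 1) := by push_cast [hNdef]; ring
    -- good lower bound
    have hkt1 : 1 ≤ k * t := Nat.mul_pos hk1 ht
    have hgoodlb : ξ0 / 2 * N ^ (k * t) ≤ (good.card : ℝ) := by
      have h6 : (v ^ 2 : ℝ) * N ^ (k * t - 1) ≤ ξ0 / 2 * N ^ (k * t) := by
        have h7 : N ^ (k * t) = N * N ^ (k * t - 1) := by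
          rw [← pow_succ']
          congr 1
          omega
        rw [h7]
        have h8 : (v ^ 2 : ℝ) ≤ ξ0 / 2 * N := by
          rw [div_mul_eq_mul_div, le_div_iff₀ (by norm_num)]
          calc (v ^ 2 : ℝ) * 2 = (2 * v ^ 2 / ξ0) * ξ0 := by field_simp
            _ ≤ N * ξ0 := by
                apply mul_le_mul_of_nonneg_right hNbig (le_of_lt hξ0)
            _ = ξ0 * N := by ring
        calc (v ^ 2 : ℝ) * N ^ (k * t - 1) ≤ (ξ0 / 2 * N) * N ^ (k * t - 1) := by
              apply mul_le_mul_of_nonneg_right h8 (by positivity)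
          _ = ξ0 / 2 * (N * N ^ (k * t - 1)) := by ring
      have h9 : (good.card : ℝ) = (T.card : ℝ) - (bad.card : ℝ) := by
        have := hsplit; push_cast [← this]; ring
      rw [h9]
      have : ξ0 * N ^ (k * t) - ξ0 / 2 * N ^ (k * t) = ξ0 / 2 * N ^ (k * t) := by ring
      linarith [hT, hbad, h6]
    -- copies finset
    set Cset := univ.filter
      (fun φ : VF → W => Function.Injective φ ∧ ∀ e ∈ EF, e.image φ ∈ EH) with hCdef
    -- every good g yields a copy
    have himg : ∀ g ∈ good, Φ g ∈ Cset := by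
      intro g hg
      rw [hgooddef, mem_filter] at hg
      obtain ⟨hgT, hinj⟩ := hg
      rw [hTdef, stmt13T, mem_filter] at hgT
      obtain ⟨-, hgT⟩ := hgT
      rw [hCdef, mem_filter]
      refine ⟨mem_univ _, hinj, ?_⟩
      intro e he
      have hrep : ∀ j : Fin k, ∃ x, (e.filter (fun y => c y = j)) = {x} :=
        fun j => Finset.card_eq_one.mp (hpart e he j)
      choose rep hrepeq using hrep
      have hrepmem : ∀ j, rep j ∈ e ∧ c (rep j) = j := by
        intro j
        have : rep j ∈ e.filter (fun y => c y = j) := by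
          rw [hrepeq j]; exact mem_singleton_self _
        simpa using this
      have hcover : ∀ x ∈ e, x = rep (c x) := by
        intro x hx
        have : x ∈ e.filter (fun y => c y = c x) := mem_filter.mpr ⟨hx, rfl⟩
        rw [hrepeq (c x)] at this
        exact mem_singleton.mp this
      have htrans := hgT (fun j => ι (rep j))
      rw [hEdef, mem_filter] at htrans
      obtain ⟨-, hwinj, hwim⟩ := htrans
      have hw : ∀ j, g j (ι (rep j)) = Φ g (rep j) := by
        intro j
        show g j (ι (rep j)) = g (c (rep j)) (ι (rep j))
        rw [(hrepmem j).2]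
      have he_eq : e = univ.image rep := by
        ext x
        simp only [Finset.mem_image, mem_univ, true_and]
        constructor
        · intro hx; exact ⟨c x, (hcover x hx).symm⟩
        · rintro ⟨j, rfl⟩; exact (hrepmem j).1
      rw [he_eq, Finset.image_image]
      have : Φ g ∘ rep = fun j => g j (ι (rep j)) := by
        funext j; exact (hw j).symm
      rw [this]
      exact hwim
    -- fibers of Φ over good are small
    have hfiber : ∀ φ0 ∈ good.image Φ,
        (good.filter (fun g => Φ g = φ0)).card ≤ n ^ (k * t - v) := by
      intro φ0 _
      have hcS : ((univ : Finset (Fin k × Fin t)) \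
          univ.image (fun x : VF => ((c x, ι x) : Fin k × Fin t))).card = k * t - v := by
        rw [Finset.card_sdiff_of_subset (Finset.subset_univ _), card_univ,
          Finset.card_image_of_injective _ hμ, card_univ]
        simp [hv]
      have := stmt13_det (good.filter (fun g => Φ g = φ0))
        ((univ : Finset (Fin k × Fin t)) \
          univ.image (fun x : VF => ((c x, ι x) : Fin k × Fin t))) ?_
      · rwa [hcS] at this
      · intro g₁ h₁ g₂ h₂ hagree
        rw [mem_filter] at h₁ h₂
        funext i b
        by_cases hib : (i, b) ∈ univ.image (fun x : VF => ((c x, ι x) : Fin k × Fin t))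
        · rw [Finset.mem_image] at hib
          obtain ⟨x, -, hx⟩ := hib
          rw [Prod.mk.injEq] at hx
          obtain ⟨h1', h2'⟩ := hx
          rw [← h1', ← h2']
          calc g₁ (c x) (ι x) = Φ g₁ x := rfl
            _ = φ0 x := by rw [h₁.2]
            _ = Φ g₂ x := by rw [h₂.2]
            _ = g₂ (c x) (ι x) := rfl
        · exact hagree (i, b) (Finset.mem_sdiff.mpr ⟨mem_univ _, hib⟩)
    have hvkt : v ≤ k * t := by
      calc v ≤ t := by omega
        _ ≤ k * t := Nat.le_mul_of_pos_left _ (by omega)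
    have hgoodub : good.card ≤ n ^ (k * t - v) * Cset.card := by
      calc good.card ≤ n ^ (k * t - v) * (good.image Φ).card :=
            Finset.card_le_mul_card_image _ _ hfiber
        _ ≤ n ^ (k * t - v) * Cset.card := by
            apply Nat.mul_le_mul_left
            exact Finset.card_le_card (Finset.image_subset_iff.mpr himg)
    -- conclusion
    have hfinal : ξ0 / 2 * N ^ v ≤ (Cset.card : ℝ) := by
      have h10 : (ξ0 / 2 * N ^ v) * N ^ (k * t - v) ≤ (Cset.card : ℝ) * N ^ (k * t - v) := by
        calc (ξ0 / 2 * N ^ v) * N ^ (k * t - v) = ξ0 / 2 * N ^ (k * t) := by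
              rw [mul_assoc, ← pow_add]
              congr 2
              omega
          _ ≤ (good.card : ℝ) := hgoodlb
          _ ≤ (n ^ (k * t - v) * Cset.card : ℕ) := by exact_mod_cast hgoodub
          _ = (Cset.card : ℝ) * N ^ (k * t - v) := by push_cast [hNdef]; ring
      exact le_of_mul_le_mul_right h10 (by positivity)
    have hseteq : ({φ : VF → W | Function.Injective φ ∧ ∀ e ∈ EF, e.image φ ∈ EH} :
        Set (VF → W)) = ↑Cset := by
      ext φ
      simp [hCdef]
    rw [hseteq, Set.ncard_coe_finset]
    exact hfinal
end
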